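/- arXiv:math/0311211 — 3 statements merged into one kernel-verified Lean document; each statement's English description precedes it below -/
import Mathlib

section
/- The generating function F_{{312,321}}(x,q,z) satisfies the identity (1 − (x+q)z + (x−1)qz²)·F_{{312,321}}(x,q,z) = 1 − qz as formal power series in x, q, z over the integers. -/
open MvPowerSeries

/-- `π` contains the pattern `σ`: there is a strictly increasing choice of indices
on which the values of `π` are in the same relative order as the values of `σ`. -/
def PermContains {n m : ℕ} (π : Equiv.Perm (Fin n)) (σ : Equiv.Perm (Fin m)) : Prop :=
  ∃ f : Fin m → Fin n, (∀ i j : Fin m, i < j → f i < f j) ∧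
    ∀ i j : Fin m, σ i < σ j ↔ π (f i) < π (f j)

/-- `π` avoids the pattern `σ`. -/
def PermAvoids {n m : ℕ} (π : Equiv.Perm (Fin n)) (σ : Equiv.Perm (Fin m)) : Prop :=
  ¬ PermContains π σ

/-- Number of fixed points of `π`. -/
noncomputable def fpCount {n : ℕ} (π : Equiv.Perm (Fin n)) : ℕ :=
  Nat.card {i : Fin n // π i = i}

/-- Number of excedances of `π`. -/
noncomputable def excCount {n : ℕ} (π : Equiv.Perm (Fin n)) : ℕ :=
  Nat.card {i : Fin n // i < π i}

/-- The pattern 123. -/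
def p123 : Equiv.Perm (Fin 3) := 1
/-- The pattern 132. -/
def p132 : Equiv.Perm (Fin 3) := Equiv.swap 1 2
/-- The pattern 213. -/
def p213 : Equiv.Perm (Fin 3) := Equiv.swap 0 1
/-- The pattern 321. -/
def p321 : Equiv.Perm (Fin 3) := Equiv.swap 0 2
/-- The pattern 231 (0 ↦ 1, 1 ↦ 2, 2 ↦ 0). -/
def p231 : Equiv.Perm (Fin 3) := Equiv.swap 0 1 * Equiv.swap 1 2
/-- The pattern 312 (0 ↦ 2, 1 ↦ 0, 2 ↦ 1). -/
def p312 : Equiv.Perm (Fin 3) := Equiv.swap 1 2 * Equiv.swap 0 1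

/-- The generating function `F_Σ(x,q,z) = Σ_{n≥0} Σ_{π ∈ S_n(Σ)} x^{fp π} q^{exc π} z^n`
as a multivariate formal power series over ℤ in variables `X 0 = x`, `X 1 = q`, `X 2 = z`:
the coefficient of `x^i q^j z^n` is the number of permutations of length `n` avoiding all
patterns of `Σ` with exactly `i` fixed points and `j` excedances. -/
noncomputable def patternGF (pats : Set (Equiv.Perm (Fin 3))) : MvPowerSeries (Fin 3) ℤ :=
  fun d => (Nat.card {π : Equiv.Perm (Fin (d 2)) //
    (∀ σ ∈ pats, PermAvoids π σ) ∧ fpCount π = d 0 ∧ excCount π = d 1} : ℤ)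

/-- The variable `x` (marking fixed points). -/
noncomputable def vx : MvPowerSeries (Fin 3) ℤ := X 0
/-- The variable `q` (marking excedances). -/
noncomputable def vq : MvPowerSeries (Fin 3) ℤ := X 1
/-- The variable `z` (marking the length). -/
noncomputable def vz : MvPowerSeries (Fin 3) ℤ := X 2
open Equiv Finset

/-- Avoiding both 312 and 321 is equivalent to this value bound. -/
def avoidN {n : ℕ} (π : Equiv.Perm (Fin n)) : Prop := ∀ i : Fin n, (π i : ℕ) ≤ (i : ℕ) + 1

lemma fpCount_eq_sum {n : ℕ} (π : Equiv.Perm (Fin n)) :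
    fpCount π = ∑ i : Fin n, if π i = i then 1 else 0 := by
  classical
  rw [fpCount, Nat.card_eq_fintype_card, Fintype.card_subtype, Finset.card_filter]

lemma excCount_eq_sum {n : ℕ} (π : Equiv.Perm (Fin n)) :
    excCount π = ∑ i : Fin n, if i < π i then 1 else 0 := by
  classical
  rw [excCount, Nat.card_eq_fintype_card, Fintype.card_subtype, Finset.card_filter]

section E0
variable {n : ℕ} (τ : Equiv.Perm (Fin n))

lemma E0_zero : (Equiv.Perm.decomposeFin.symm (0, τ)) 0 = 0 := by simp

lemma E0_succ (i : Fin n) : (Equiv.Perm.decomposeFin.symm (0, τ)) i.succ = (τ i).succ := by simp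

lemma fp_E0 : fpCount (Equiv.Perm.decomposeFin.symm (0, τ)) = fpCount τ + 1 := by
  classical
  rw [fpCount_eq_sum, fpCount_eq_sum, Fin.sum_univ_succ]
  simp [Fin.succ_inj, add_comm]

lemma exc_E0 : excCount (Equiv.Perm.decomposeFin.symm (0, τ)) = excCount τ := by
  classical
  rw [excCount_eq_sum, excCount_eq_sum, Fin.sum_univ_succ]
  simp [Fin.succ_lt_succ_iff]

lemma avoid_E0 : avoidN (Equiv.Perm.decomposeFin.symm (0, τ)) ↔ avoidN τ := by
  constructor
  · intro h i
    have := h i.succ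
    rw [E0_succ] at this
    simpa [Fin.val_succ] using this
  · intro h i
    refine Fin.cases ?_ (fun j => ?_) i
    · simp [E0_zero]
    · rw [E0_succ]
      have := h j
      simp [Fin.val_succ]
      omega

end E0
section E1
variable {n : ℕ} (τ : Equiv.Perm (Fin (n + 1)))

lemma sw01 (v : Fin (n + 1)) :
    Equiv.swap (0 : Fin (n + 2)) 1 v.succ = if v = 0 then 0 else v.succ := by
  by_cases h : v = 0
  · subst h; simp [Fin.succ_zero_eq_one]
  · rw [if_neg h, Equiv.swap_apply_of_ne_of_ne (Fin.succ_ne_zero v)]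
    intro hc
    rw [← Fin.succ_zero_eq_one] at hc
    exact h (Fin.succ_inj.mp hc)

lemma E1_zero : (Equiv.Perm.decomposeFin.symm (1, τ)) 0 = 1 := by simp

lemma E1_succ (i : Fin (n + 1)) :
    (Equiv.Perm.decomposeFin.symm (1, τ)) i.succ = if τ i = 0 then 0 else (τ i).succ := by
  rw [Equiv.Perm.decomposeFin_symm_apply_succ, sw01]

lemma fp_E1 : fpCount τ = fpCount (Equiv.Perm.decomposeFin.symm (1, τ))
    + (if τ 0 = 0 then 1 else 0) := by
  classical
  rw [fpCount_eq_sum, fpCount_eq_sum]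
  rw [Fin.sum_univ_succ (f := fun i => if (Equiv.Perm.decomposeFin.symm (1, τ)) i = i then 1 else 0)]
  rw [Fin.sum_univ_succ (f := fun i => if (Equiv.Perm.decomposeFin.symm (1, τ)) i.succ = i.succ then 1 else 0)]
  rw [Fin.sum_univ_succ (f := fun i => if τ i = i then 1 else 0)]
  have h0 : ((if (Equiv.Perm.decomposeFin.symm (1, τ)) 0 = 0 then 1 else 0) : ℕ) = 0 := by
    rw [E1_zero]; simp
  have h1 : ((if (Equiv.Perm.decomposeFin.symm (1, τ)) (Fin.succ 0) = Fin.succ 0 then 1 else 0) : ℕ) = 0 := by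
    rw [E1_succ]
    by_cases h : τ 0 = 0
    · simp [h, (Fin.succ_ne_zero (0 : Fin (n+1))).symm]
    · rw [if_neg h]
      exact if_neg (fun hc => h (Fin.succ_inj.mp hc))
  rw [h0, h1]
  have h2 : ∀ i : Fin n, ((if (Equiv.Perm.decomposeFin.symm (1, τ)) i.succ.succ = i.succ.succ then 1 else 0) : ℕ)
      = if τ i.succ = i.succ then 1 else 0 := by
    intro i
    rw [E1_succ]
    by_cases h : τ i.succ = 0
    · simp [h, eq_comm, Fin.succ_ne_zero]
    · rw [if_neg h]
      simp [Fin.succ_inj]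
  rw [Finset.sum_congr rfl (fun i _ => h2 i)]
  ring
lemma exc_E1 : excCount (Equiv.Perm.decomposeFin.symm (1, τ)) = excCount τ + 1 := by
  classical
  rw [excCount_eq_sum, excCount_eq_sum]
  rw [Fin.sum_univ_succ (f := fun i => if i < (Equiv.Perm.decomposeFin.symm (1, τ)) i then 1 else 0)]
  have h0 : ((if (0 : Fin (n+2)) < (Equiv.Perm.decomposeFin.symm (1, τ)) 0 then 1 else 0) : ℕ) = 1 := by
    rw [E1_zero, if_pos Fin.one_pos]
  have h2 : ∀ i : Fin (n+1),
      ((if i.succ < (Equiv.Perm.decomposeFin.symm (1, τ)) i.succ then 1 else 0) : ℕ)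
      = if i < τ i then 1 else 0 := by
    intro i
    rw [E1_succ]
    by_cases h : τ i = 0
    · simp [h, Fin.not_lt_zero]
    · rw [if_neg h, if_congr Fin.succ_lt_succ_iff rfl rfl]
  rw [h0, Finset.sum_congr rfl (fun i _ => h2 i)]
  ring

lemma avoid_E1 : avoidN (Equiv.Perm.decomposeFin.symm (1, τ)) ↔ avoidN τ := by
  constructor
  · intro h i
    have := h i.succ
    rw [E1_succ] at this
    by_cases hz : τ i = 0
    · simp [hz]
    · rw [if_neg hz] at this
      simpa [Fin.val_succ] using this
  · intro h i
    refine Fin.cases ?_ (fun j => ?_) i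
    · rw [E1_zero]
      simp [Fin.val_one]
    · rw [E1_succ]
      by_cases hz : τ j = 0
      · simp [hz]
      · rw [if_neg hz]
        have := h j
        simp [Fin.val_succ]
        omega

end E1
lemma contains_of_triple {n : ℕ} (π : Equiv.Perm (Fin n)) (i j k : Fin n)
    (h1 : i < j) (h2 : j < k) (hji : π j < π i) (hki : π k < π i) :
    ∃ σ ∈ ({p312, p321} : Set (Equiv.Perm (Fin 3))), PermContains π σ := by
  have hmono : ∀ u v : Fin 3, u < v →
      (fun u : Fin 3 => if u.val = 0 then i else if u.val = 1 then j else k) u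
      < (fun u : Fin 3 => if u.val = 0 then i else if u.val = 1 then j else k) v := by
    intro u v huv
    fin_cases u <;> fin_cases v <;>
      first | exact absurd huv (by decide) | exact h1 | exact h2 | exact h1.trans h2
  rcases lt_or_gt_of_ne (fun hc : π j = π k => absurd (π.injective hc) h2.ne) with hor | hor
  · refine ⟨p312, by simp, ⟨_, hmono, ?_⟩⟩
    intro u v
    fin_cases u <;> fin_cases v <;>
      first
      | exact iff_of_false (by decide) (lt_irrefl _)
      | exact iff_of_false (by decide) (asymm hji)
      | exact iff_of_false (by decide) (asymm hki)
      | exact iff_of_false (by decide) (asymm hor)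
      | exact iff_of_true (by decide) hji
      | exact iff_of_true (by decide) hki
      | exact iff_of_true (by decide) hor
  · refine ⟨p321, by simp, ⟨_, hmono, ?_⟩⟩
    intro u v
    fin_cases u <;> fin_cases v <;>
      first
      | exact iff_of_false (by decide) (lt_irrefl _)
      | exact iff_of_false (by decide) (asymm hji)
      | exact iff_of_false (by decide) (asymm hki)
      | exact iff_of_false (by decide) (asymm hor)
      | exact iff_of_true (by decide) hji
      | exact iff_of_true (by decide) hki
      | exact iff_of_true (by decide) hor

lemma avoidN_of_avoids {n : ℕ} (π : Equiv.Perm (Fin n))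
    (h : ∀ σ ∈ ({p312, p321} : Set (Equiv.Perm (Fin 3))), PermAvoids π σ) : avoidN π := by
  classical
  by_contra hc
  rw [avoidN] at hc
  push_neg at hc
  obtain ⟨i, hi⟩ := hc
  set V : Finset (Fin n) := Finset.univ.filter (fun j => π j < π i) with hV
  have himg : V.image π = Finset.Iio (π i) := by
    ext v
    simp only [Finset.mem_image, Finset.mem_Iio, hV, Finset.mem_filter, Finset.mem_univ, true_and]
    constructor
    · rintro ⟨j, hj, rfl⟩; exact hj
    · intro hv; exact ⟨π.symm v, by simpa using hv, by simp⟩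
  have hcardV : V.card = (π i : ℕ) := by
    rw [← Finset.card_image_of_injective V π.injective, himg, Fin.card_Iio]
  have hsub : V ∩ Finset.Iic i ⊆ Finset.Iio i := by
    intro j hj
    simp only [Finset.mem_inter, hV, Finset.mem_filter, Finset.mem_univ, true_and,
      Finset.mem_Iic] at hj
    rw [Finset.mem_Iio]
    rcases lt_or_eq_of_le hj.2 with h' | h'
    · exact h'
    · exact absurd (h' ▸ hj.1) (lt_irrefl _)
  have hcard2 : 2 ≤ (V \ Finset.Iic i).card := by
    have := Finset.card_inter_add_card_sdiff V (Finset.Iic i)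
    have h2 := Finset.card_le_card hsub
    rw [Fin.card_Iio] at h2
    omega
  obtain ⟨j, hj, k, hk, hjk⟩ := Finset.one_lt_card.mp (by omega : 1 < (V \ Finset.Iic i).card)
  simp only [Finset.mem_sdiff, hV, Finset.mem_filter, Finset.mem_univ, true_and,
    Finset.mem_Iic, not_le] at hj hk
  have main : ∀ j k : Fin n, π j < π i ∧ i < j → π k < π i ∧ i < k → j < k → False := by
    intro j k hj hk hlt
    obtain ⟨σ, hσ, hcont⟩ := contains_of_triple π i j k hj.2 hlt hj.1 hk.1
    exact h σ hσ hcont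
  rcases lt_or_gt_of_ne hjk with hlt | hlt
  · exact main j k hj hk hlt
  · exact main k j hk hj hlt
lemma avoids_of_avoidN {n : ℕ} (π : Equiv.Perm (Fin n)) (h : avoidN π) :
    ∀ σ ∈ ({p312, p321} : Set (Equiv.Perm (Fin 3))), PermAvoids π σ := by
  classical
  intro σ hσ hcont
  obtain ⟨f, hmono, hiff⟩ := hcont
  have hs10 : σ 1 < σ 0 ∧ σ 2 < σ 0 := by
    rcases hσ with h' | h' <;> subst h' <;> constructor <;> decide
  have hp1 : π (f 1) < π (f 0) := (hiff 1 0).mp hs10.1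
  have hp2 : π (f 2) < π (f 0) := (hiff 2 0).mp hs10.2
  have h01 : f 0 < f 1 := hmono 0 1 (by decide)
  have h12 : f 1 < f 2 := hmono 1 2 (by decide)
  set U : Finset (Fin n) := Finset.Iic (f 0) ∪ {f 1, f 2} with hU
  have hdisj : Disjoint (Finset.Iic (f 0)) ({f 1, f 2} : Finset (Fin n)) := by
    rw [Finset.disjoint_right]
    intro x hx
    simp only [Finset.mem_insert, Finset.mem_singleton] at hx
    rw [Finset.mem_Iic, not_le]
    rcases hx with rfl | rfl
    · exact h01
    · exact h01.trans h12
  have hcardU : U.card = (f 0 : ℕ) + 3 := by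
    rw [hU, Finset.card_union_of_disjoint hdisj, Fin.card_Iic,
      Finset.card_pair h12.ne]
  have hmaps : ∀ x ∈ U, (π x : ℕ) ∈ Finset.range ((f 0 : ℕ) + 2) := by
    intro x hx
    rw [Finset.mem_range]
    rw [hU, Finset.mem_union, Finset.mem_Iic] at hx
    rcases hx with hx | hx
    · have := h x
      have : (x : ℕ) ≤ (f 0 : ℕ) := hx
      have h2 := h x
      omega
    · simp only [Finset.mem_insert, Finset.mem_singleton] at hx
      have hb := h (f 0)
      rcases hx with rfl | rfl
      · have h' : (π (f 1) : ℕ) < (π (f 0) : ℕ) := hp1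
        omega
      · have h' : (π (f 2) : ℕ) < (π (f 0) : ℕ) := hp2
        omega
  have hinj : Set.InjOn (fun x => ((π x : Fin n) : ℕ)) U := by
    intro x _ y _ hxy
    exact π.injective (Fin.val_injective hxy)
  have := Finset.card_le_card_of_injOn _ hmaps hinj
  rw [hcardU, Finset.card_range] at this
  omega
/-- The counting function for avoiders. -/
noncomputable def fC (a b n : ℕ) : ℕ :=
  Nat.card {π : Equiv.Perm (Fin n) // avoidN π ∧ fpCount π = a ∧ excCount π = b}

/-- Count of avoiders sending 0 to 1 (at length `n+1`, with `G _ _ 0 = 0`). -/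
noncomputable def G : ℕ → ℕ → ℕ → ℕ
  | _, _, 0 => 0
  | a, b, n + 1 =>
    Nat.card {π : Equiv.Perm (Fin (n + 2)) //
      (avoidN π ∧ fpCount π = a ∧ excCount π = b) ∧ π 0 = 1}

lemma fC_zero (a b : ℕ) : fC a b 0 = if a = 0 ∧ b = 0 then 1 else 0 := by
  classical
  have hall : ∀ π : Equiv.Perm (Fin 0), avoidN π ∧ fpCount π = 0 ∧ excCount π = 0 := by
    intro π
    refine ⟨fun i => i.elim0, ?_, ?_⟩ <;>
      simp [fpCount_eq_sum, excCount_eq_sum]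
  rw [fC]
  split_ifs with hab
  · obtain ⟨rfl, rfl⟩ := hab
    rw [Nat.card_congr ((Equiv.subtypeEquivRight (fun π => iff_of_true (hall π) trivial)).trans
      (Equiv.subtypeUnivEquiv (fun _ => trivial)))]
    rw [Nat.card_eq_fintype_card]
    simp
  · rw [Nat.card_eq_zero]
    left
    rw [isEmpty_subtype]
    rintro π ⟨h1, h2, h3⟩
    have := hall π
    omega

lemma fC_one (a b : ℕ) : fC a b 1 = if a = 1 ∧ b = 0 then 1 else 0 := by
  classical
  have hall : ∀ π : Equiv.Perm (Fin 1), avoidN π ∧ fpCount π = 1 ∧ excCount π = 0 := by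
    intro π
    have hfix : ∀ i : Fin 1, π i = i := fun i => Subsingleton.elim _ _
    refine ⟨fun i => by omega, ?_, ?_⟩
    · simp [fpCount_eq_sum, hfix]
    · simp [excCount_eq_sum, hfix]
  rw [fC]
  split_ifs with hab
  · obtain ⟨rfl, rfl⟩ := hab
    rw [Nat.card_congr ((Equiv.subtypeEquivRight (fun π => iff_of_true (hall π) trivial)).trans
      (Equiv.subtypeUnivEquiv (fun _ => trivial)))]
    rw [Nat.card_eq_fintype_card]
    simp
  · rw [Nat.card_eq_zero]
    left
    rw [isEmpty_subtype]
    rintro π ⟨h1, h2, h3⟩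
    have := hall π
    omega

lemma card_split {α : Type*} [Fintype α] (P Q : α → Prop) :
    Nat.card {x // P x} = Nat.card {x // P x ∧ Q x} + Nat.card {x // P x ∧ ¬ Q x} := by
  classical
  simp only [Nat.card_eq_fintype_card, Fintype.card_subtype]
  rw [← Finset.filter_filter, ← Finset.filter_filter,
    Finset.card_filter_add_card_filter_not]
lemma card_zero_succ (n a b : ℕ) :
    Nat.card {π : Equiv.Perm (Fin (n + 1)) //
      (avoidN π ∧ fpCount π = a + 1 ∧ excCount π = b) ∧ π 0 = 0} = fC a b n := by
  classical
  rw [fC]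
  symm
  apply Nat.card_congr
  refine Equiv.ofBijective
    (fun τ => ⟨Equiv.Perm.decomposeFin.symm (0, τ.1),
      ⟨⟨(avoid_E0 τ.1).mpr τ.2.1, by rw [fp_E0, τ.2.2.1], by rw [exc_E0, τ.2.2.2]⟩,
        E0_zero τ.1⟩⟩) ⟨?_, ?_⟩
  · intro τ1 τ2 h
    apply Subtype.ext
    have h' := congrArg Subtype.val h
    have := Equiv.Perm.decomposeFin.symm.injective h'
    exact (Prod.mk.injEq _ _ _ _ ▸ this).2
  · rintro ⟨π, ⟨h1, h2, h3⟩, h0⟩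
    set q := Equiv.Perm.decomposeFin π with hq
    have hsymm : Equiv.Perm.decomposeFin.symm (q.1, q.2) = π := by
      rw [hq, Prod.mk.eta, Equiv.symm_apply_apply]
    have hq1 : q.1 = 0 := by
      rw [← h0, ← hsymm, Equiv.Perm.decomposeFin_symm_apply_zero]
    rw [hq1] at hsymm
    refine ⟨⟨q.2, (avoid_E0 q.2).mp (hsymm ▸ h1), ?_, ?_⟩, Subtype.ext hsymm⟩
    · have := fp_E0 q.2
      rw [hsymm, h2] at this
      omega
    · have := exc_E0 q.2
      rw [hsymm, h3] at this
      omega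

lemma card_zero_fp0 (n b : ℕ) :
    Nat.card {π : Equiv.Perm (Fin (n + 1)) //
      (avoidN π ∧ fpCount π = 0 ∧ excCount π = b) ∧ π 0 = 0} = 0 := by
  rw [Nat.card_eq_zero]
  left
  rw [isEmpty_subtype]
  rintro π ⟨⟨h1, h2, h3⟩, h0⟩
  rw [fpCount_eq_sum, Fin.sum_univ_succ, if_pos h0] at h2
  omega

lemma card_one_succ (n a b : ℕ) :
    Nat.card {π : Equiv.Perm (Fin (n + 2)) //
      (avoidN π ∧ fpCount π = a ∧ excCount π = b + 1) ∧ π 0 = 1}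
    = Nat.card {τ : Equiv.Perm (Fin (n + 1)) //
        avoidN τ ∧ fpCount τ = a + (if τ 0 = 0 then 1 else 0) ∧ excCount τ = b} := by
  classical
  symm
  apply Nat.card_congr
  refine Equiv.ofBijective
    (fun τ => ⟨Equiv.Perm.decomposeFin.symm (1, τ.1),
      ⟨⟨(avoid_E1 τ.1).mpr τ.2.1, ?_, by rw [exc_E1, τ.2.2.2]⟩,
        E1_zero τ.1⟩⟩) ⟨?_, ?_⟩
  · have h := fp_E1 τ.1
    have h2 := τ.2.2.1
    omega
  · intro τ1 τ2 h
    apply Subtype.ext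
    have h' := congrArg Subtype.val h
    have := Equiv.Perm.decomposeFin.symm.injective h'
    exact (Prod.mk.injEq _ _ _ _ ▸ this).2
  · rintro ⟨π, ⟨h1, h2, h3⟩, h0⟩
    set q := Equiv.Perm.decomposeFin π with hq
    have hsymm : Equiv.Perm.decomposeFin.symm (q.1, q.2) = π := by
      rw [hq, Prod.mk.eta, Equiv.symm_apply_apply]
    have hq1 : q.1 = 1 := by
      rw [← h0, ← hsymm, Equiv.Perm.decomposeFin_symm_apply_zero]
    rw [hq1] at hsymm
    refine ⟨⟨q.2, (avoid_E1 q.2).mp (hsymm ▸ h1), ?_, ?_⟩, Subtype.ext hsymm⟩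
    · have := fp_E1 q.2
      rw [hsymm, h2] at this
      omega
    · have := exc_E1 q.2
      rw [hsymm, h3] at this
      omega

lemma card_tau_notzero (n a b : ℕ) :
    Nat.card {τ : Equiv.Perm (Fin (n + 1)) //
      (avoidN τ ∧ fpCount τ = a ∧ excCount τ = b) ∧ τ 0 ≠ 0} = G a b n := by
  classical
  cases n with
  | zero =>
    rw [G, Nat.card_eq_zero]
    left
    rw [isEmpty_subtype]
    rintro τ ⟨-, h0⟩
    exact h0 (Fin.ext (by have := (τ 0).isLt; omega))
  | succ m =>
    rw [G]
    apply Nat.card_congr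
    apply Equiv.subtypeEquivRight
    intro τ
    constructor
    · rintro ⟨⟨h1, h2, h3⟩, h0⟩
      refine ⟨⟨h1, h2, h3⟩, ?_⟩
      have hb := h1 0
      simp only [Fin.val_zero, zero_add] at hb
      refine Fin.ext ?_
      rw [Fin.val_one]
      have h0' : (τ 0 : ℕ) ≠ 0 := fun hc => h0 (Fin.ext (by rw [hc, Fin.val_zero]))
      omega
    · rintro ⟨⟨h1, h2, h3⟩, h0⟩
      refine ⟨⟨h1, h2, h3⟩, ?_⟩
      rw [h0]
      exact one_ne_zero

lemma G_b0 (a n : ℕ) : G a 0 n = 0 := by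
  cases n with
  | zero => rfl
  | succ m =>
    rw [G, Nat.card_eq_zero]
    left
    rw [isEmpty_subtype]
    rintro π ⟨⟨h1, h2, h3⟩, h0⟩
    rw [excCount_eq_sum, Fin.sum_univ_succ, if_pos (by rw [h0]; exact Fin.one_pos)] at h3
    omega
lemma S1 (a b n : ℕ) :
    fC a b (n + 1) = (if a = 0 then 0 else fC (a - 1) b n) + G a b n := by
  cases n with
  | zero =>
    have hG : G a b 0 = 0 := rfl
    rw [fC_one, hG]
    cases a with
    | zero => simp
    | succ a' => rw [if_neg (Nat.succ_ne_zero a'), fC_zero]; split_ifs <;> omega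
  | succ m =>
    rw [fC, card_split (fun π : Equiv.Perm (Fin (m + 2)) =>
        avoidN π ∧ fpCount π = a ∧ excCount π = b) (fun π => π 0 = 0),
      card_tau_notzero (m + 1) a b]
    congr 1
    cases a with
    | zero => rw [if_pos rfl, card_zero_fp0]
    | succ a' => rw [if_neg (Nat.succ_ne_zero a'), Nat.add_sub_cancel, card_zero_succ]

lemma S2 (a b n : ℕ) : G a (b + 1) (n + 1) = fC a b n + G a b n := by
  have hG : G a (b + 1) (n + 1) = Nat.card {π : Equiv.Perm (Fin (n + 2)) //
      (avoidN π ∧ fpCount π = a ∧ excCount π = b + 1) ∧ π 0 = 1} := rfl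
  rw [hG, card_one_succ, card_split (fun τ : Equiv.Perm (Fin (n + 1)) =>
      avoidN τ ∧ fpCount τ = a + (if τ 0 = 0 then 1 else 0) ∧ excCount τ = b)
      (fun τ => τ 0 = 0)]
  congr 1
  · rw [← card_zero_succ n a b]
    apply Nat.card_congr
    apply Equiv.subtypeEquivRight
    intro τ
    constructor
    · rintro ⟨⟨h1, h2, h3⟩, h0⟩
      rw [if_pos h0] at h2
      exact ⟨⟨h1, h2, h3⟩, h0⟩
    · rintro ⟨⟨h1, h2, h3⟩, h0⟩
      exact ⟨⟨h1, by rw [if_pos h0]; omega, h3⟩, h0⟩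
  · rw [← card_tau_notzero n a b]
    apply Nat.card_congr
    apply Equiv.subtypeEquivRight
    intro τ
    constructor
    · rintro ⟨⟨h1, h2, h3⟩, h0⟩
      rw [if_neg h0] at h2
      exact ⟨⟨h1, by omega, h3⟩, h0⟩
    · rintro ⟨⟨h1, h2, h3⟩, h0⟩
      rw [if_neg h0]
      exact ⟨⟨h1, by omega, h3⟩, h0⟩

lemma key (a b n : ℕ) :
    (fC a b n : ℤ)
      - (if 1 ≤ a ∧ 1 ≤ n then (fC (a - 1) b (n - 1) : ℤ) else 0)
      - (if 1 ≤ b ∧ 1 ≤ n then (fC a (b - 1) (n - 1) : ℤ) else 0)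
      + (if 1 ≤ a ∧ 1 ≤ b ∧ 2 ≤ n then (fC (a - 1) (b - 1) (n - 2) : ℤ) else 0)
      - (if 1 ≤ b ∧ 2 ≤ n then (fC a (b - 1) (n - 2) : ℤ) else 0)
    = (if a = 0 ∧ b = 0 ∧ n = 0 then 1 else 0)
      - (if a = 0 ∧ b = 1 ∧ n = 1 then 1 else 0) := by
  match n with
  | 0 =>
    split_ifs <;> simp_all [fC_zero] <;> omega
  | 1 =>
    split_ifs <;> simp_all [fC_one, fC_zero] <;> omega
  | (m + 2) =>
    cases b with
    | zero =>
      have h1 : fC a 0 (m + 2) = (if a = 0 then 0 else fC (a - 1) 0 (m + 1)) + 0 := by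
        rw [S1, G_b0]
      cases a with
      | zero =>
        rw [if_pos rfl] at h1
        rw [h1, show m + 2 - 1 = m + 1 from rfl]
        split_ifs <;> first | omega | simp_all
      | succ a' =>
        rw [if_neg (Nat.succ_ne_zero a'), Nat.add_sub_cancel] at h1
        rw [h1, show m + 2 - 1 = m + 1 from rfl, Nat.add_sub_cancel]
        split_ifs <;> first | omega | simp_all
    | succ c =>
      have h1 : fC a (c + 1) (m + 2)
          = (if a = 0 then 0 else fC (a - 1) (c + 1) (m + 1)) + G a (c + 1) (m + 1) := S1 _ _ _
      have h2 : G a (c + 1) (m + 1) = fC a c m + G a c m := S2 _ _ _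
      have h3 : fC a c (m + 1) = (if a = 0 then 0 else fC (a - 1) c m) + G a c m := S1 _ _ _
      cases a with
      | zero =>
        rw [if_pos rfl] at h1 h3
        rw [h1, h2, show m + 2 - 1 = m + 1 from rfl, show m + 2 - 2 = m from rfl,
          Nat.add_sub_cancel]
        split_ifs <;> first | omega | simp_all
      | succ a' =>
        rw [if_neg (Nat.succ_ne_zero a'), Nat.add_sub_cancel] at h1 h3
        rw [h1, h2, show m + 2 - 1 = m + 1 from rfl, show m + 2 - 2 = m from rfl,
          Nat.add_sub_cancel, Nat.add_sub_cancel]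
        split_ifs <;> first | omega | simp_all
lemma le3 (e d : Fin 3 →₀ ℕ) : e ≤ d ↔ e 0 ≤ d 0 ∧ e 1 ≤ d 1 ∧ e 2 ≤ d 2 := by
  rw [Finsupp.le_def]
  constructor
  · intro h; exact ⟨h 0, h 1, h 2⟩
  · rintro ⟨h0, h1, h2⟩ s
    fin_cases s <;> assumption

lemma eq3 (d e : Fin 3 →₀ ℕ) : d = e ↔ d 0 = e 0 ∧ d 1 = e 1 ∧ d 2 = e 2 := by
  constructor
  · rintro rfl; exact ⟨rfl, rfl, rfl⟩
  · rintro ⟨h0, h1, h2⟩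
    ext s
    fin_cases s <;> assumption

lemma patternGF_eq : patternGF {p312, p321} = fun d => (fC (d 0) (d 1) (d 2) : ℤ) := by
  funext d
  have h : Nat.card {π : Equiv.Perm (Fin (d 2)) //
      (∀ σ ∈ ({p312, p321} : Set (Equiv.Perm (Fin 3))), PermAvoids π σ)
      ∧ fpCount π = d 0 ∧ excCount π = d 1} = fC (d 0) (d 1) (d 2) := by
    rw [fC]
    refine Nat.card_congr (Equiv.subtypeEquivRight fun π => ?_)
    constructor
    · rintro ⟨h1, h2⟩; exact ⟨avoidN_of_avoids π h1, h2⟩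
    · rintro ⟨h1, h2⟩; exact ⟨avoids_of_avoidN π h1, h2⟩
  simp only [patternGF]
  rw [h]
/-- (1 − (x+q)z + (x−1)qz²)·F_{{312,321}}(x,q,z) = 1 − qz. -/
theorem F312_321_identity :
    (1 - (vx + vq) * vz + (vx - 1) * vq * vz ^ 2) * patternGF {p312, p321} =
      1 - vq * vz := by
  classical
  set F := patternGF {p312, p321} with hF
  have hxz : vx * vz = monomial (R := ℤ) (Finsupp.single (0 : Fin 3) 1 + Finsupp.single 2 1) 1 := by
    simp only [vx, vz, X_def, monomial_mul_monomial, mul_one]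
  have hqz : vq * vz = monomial (R := ℤ) (Finsupp.single (1 : Fin 3) 1 + Finsupp.single 2 1) 1 := by
    simp only [vq, vz, X_def, monomial_mul_monomial, mul_one]
  have hz2 : vz ^ 2 = monomial (R := ℤ) (Finsupp.single (2 : Fin 3) 2) 1 := by
    rw [vz, X_pow_eq]
  have hxqz : vx * vq * vz ^ 2
      = monomial (R := ℤ) (Finsupp.single (0 : Fin 3) 1 + Finsupp.single 1 1 + Finsupp.single 2 2) 1 := by
    simp only [vx, vq, hz2, X_def, monomial_mul_monomial, mul_one]
  have hqz2 : vq * vz ^ 2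
      = monomial (R := ℤ) (Finsupp.single (1 : Fin 3) 1 + Finsupp.single 2 2) 1 := by
    simp only [vq, hz2, X_def, monomial_mul_monomial, mul_one]
  have hP : (1 - (vx + vq) * vz + (vx - 1) * vq * vz ^ 2) * F
      = F - (vx * vz) * F - (vq * vz) * F + (vx * vq * vz ^ 2) * F - (vq * vz ^ 2) * F := by
    ring
  have hco : ∀ e : Fin 3 →₀ ℕ, (coeff (R := ℤ) e) F = (fC (e 0) (e 1) (e 2) : ℤ) := by
    intro e
    rw [hF, patternGF_eq]; rfl
  apply MvPowerSeries.ext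
  intro d
  rw [hP, hxz, hqz, hxqz, hqz2]
  rw [map_sub, map_sub, map_add, map_sub, map_sub]
  rw [coeff_monomial_mul, coeff_monomial_mul, coeff_monomial_mul, coeff_monomial_mul,
    coeff_one, coeff_monomial]
  rw [hco, hco, hco, hco, hco]
  simp only [one_mul, le3, eq3, Finsupp.add_apply, Finsupp.single_apply, Finsupp.tsub_apply,
    Finsupp.coe_zero, Pi.zero_apply]
  norm_num [Fin.ext_iff]
  exact key (d 0) (d 1) (d 2)
end

section
/- The generating function F_{{231,321}}(x,q,z) satisfies the identity (1 − (x+1)z + (x−q)z²)·F_{{231,321}}(x,q,z) = 1 − z as formal power series in x, q, z over the integers. -/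
open MvPowerSeries

/-- The simple characterization of avoiding both 231 and 321. -/
def GoodPerm {n : ℕ} (π : Equiv.Perm (Fin n)) : Prop :=
  ∀ k : Fin n, (k : ℕ) ≤ (π k : ℕ) + 1

/-- A triple witnessing a 231 or 321 pattern. -/
def BadTriple {n : ℕ} (π : Equiv.Perm (Fin n)) : Prop :=
  ∃ i j k : Fin n, i < j ∧ j < k ∧ π k < π i ∧ π k < π j


lemma badTriple_of_not_good {n : ℕ} {π : Equiv.Perm (Fin n)} (h : ¬ GoodPerm π) :
    BadTriple π := by
  classical
  simp only [GoodPerm, not_forall, not_le] at h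
  obtain ⟨k, hk⟩ := h
  set B : Finset (Fin n) := (Finset.Iio k).filter (fun p => π k < π p) with hB
  set D : Finset (Fin n) := (Finset.Iio k).filter (fun p => π p < π k) with hD
  have hDcard : D.card ≤ (π k : ℕ) := by
    have : D.card ≤ (Finset.Iio (π k)).card := by
      apply Finset.card_le_card_of_injOn (fun p => π p)
      · intro p hp
        simp only [hD, Finset.mem_coe, Finset.mem_filter, Finset.mem_Iio] at hp ⊢
        exact hp.2
      · intro a _ b _ hab
        exact π.injective hab
    simpa [Fin.card_Iio] using this
  have hsub : Finset.Iio k ⊆ B ∪ D := by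
    intro p hp
    simp only [hB, hD, Finset.mem_union, Finset.mem_filter]
    have hpk : p ≠ k := by
      intro he; subst he; exact absurd (Finset.mem_Iio.mp hp) (lt_irrefl _)
    rcases lt_trichotomy (π p) (π k) with h1 | h1 | h1
    · exact Or.inr ⟨hp, h1⟩
    · exact absurd (π.injective h1) hpk
    · exact Or.inl ⟨hp, h1⟩
  have hcard : 2 ≤ B.card := by
    have h1 : (Finset.Iio k).card = (k : ℕ) := Fin.card_Iio k
    have h2 := Finset.card_le_card hsub
    have h3 := Finset.card_union_le B D
    omega
  obtain ⟨i, hi, j, hj, hij⟩ := Finset.one_lt_card.mp hcard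
  simp only [hB, Finset.mem_filter, Finset.mem_Iio] at hi hj
  rcases lt_or_gt_of_ne hij with hlt | hlt
  · exact ⟨i, j, k, hlt, hj.1, hi.2, hj.2⟩
  · exact ⟨j, i, k, hlt, hi.1, hj.2, hi.2⟩

lemma not_badTriple_of_good {n : ℕ} {π : Equiv.Perm (Fin n)} (h : GoodPerm π) :
    ¬ BadTriple π := by
  classical
  rintro ⟨i, j, k, hij, hjk, hki, hkj⟩
  have hπk : (k : ℕ) ≤ (π k : ℕ) + 1 := h k
  have hπi : (k : ℕ) ≤ (π i : ℕ) := by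
    have := Fin.lt_def.mp hki; omega
  have hπj : (k : ℕ) ≤ (π j : ℕ) := by
    have := Fin.lt_def.mp hkj; omega
  have hijne : i ≠ j := ne_of_lt hij
  have hcard : (Finset.Iio k).card ≤ (Finset.Iic k \ {i, j}).card := by
    apply Finset.card_le_card_of_injOn (fun v => π.symm v)
    · intro v hv
      have hvk : (v : ℕ) < (k : ℕ) := Fin.lt_def.mp (Finset.mem_Iio.mp hv)
      have h1 : (π.symm v : ℕ) ≤ (π (π.symm v) : ℕ) + 1 := h _
      rw [π.apply_symm_apply] at h1
      simp only [Finset.mem_coe, Finset.mem_sdiff, Finset.mem_Iic, Finset.mem_insert, Finset.mem_singleton]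
      refine ⟨Fin.le_def.mpr (by omega), ?_⟩
      rintro (he | he)
      · have : π i = v := by rw [← he, π.apply_symm_apply]
        rw [← this] at hvk; omega
      · have : π j = v := by rw [← he, π.apply_symm_apply]
        rw [← this] at hvk; omega
    · intro a _ b _ hab
      exact π.symm.injective hab
  have hsub : ({i, j} : Finset (Fin n)) ⊆ Finset.Iic k := by
    intro p hp
    simp only [Finset.mem_insert, Finset.mem_singleton] at hp
    rcases hp with rfl | rfl
    · exact Finset.mem_Iic.mpr (le_of_lt (lt_trans hij hjk))
    · exact Finset.mem_Iic.mpr (le_of_lt hjk)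
  have h2 : ({i, j} : Finset (Fin n)).card = 2 := by
    rw [Finset.card_insert_of_notMem (by simpa using hijne), Finset.card_singleton]
  have h3 : (Finset.Iic k \ {i, j}).card = (Finset.Iic k).card - 2 := by
    rw [Finset.card_sdiff_of_subset hsub, h2]
  have h4 : (Finset.Iic k).card = (k : ℕ) + 1 := Fin.card_Iic k
  have h5 : (Finset.Iio k).card = (k : ℕ) := Fin.card_Iio k
  omega


lemma badTriple_of_contains_231 {n : ℕ} {π : Equiv.Perm (Fin n)}
    (h : PermContains π p231) : BadTriple π := by
  obtain ⟨f, hmono, hord⟩ := h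
  refine ⟨f 0, f 1, f 2, hmono 0 1 (by decide), hmono 1 2 (by decide), ?_, ?_⟩
  · exact (hord 2 0).mp (by decide)
  · exact (hord 2 1).mp (by decide)

lemma badTriple_of_contains_321 {n : ℕ} {π : Equiv.Perm (Fin n)}
    (h : PermContains π p321) : BadTriple π := by
  obtain ⟨f, hmono, hord⟩ := h
  refine ⟨f 0, f 1, f 2, hmono 0 1 (by decide), hmono 1 2 (by decide), ?_, ?_⟩
  · exact (hord 2 0).mp (by decide)
  · exact (hord 2 1).mp (by decide)


lemma fin3_cases (a : Fin 3) : a = 0 ∨ a = 1 ∨ a = 2 := by revert a; decide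

lemma contains231_aux {n : ℕ} {π : Equiv.Perm (Fin n)} {i j k : Fin n}
    (hij : i < j) (hjk : j < k) (hki : π k < π i) (hkj : π k < π j)
    (h01 : π i < π j) : PermContains π p231 := by
  refine ⟨fun a => if a.val = 0 then i else if a.val = 1 then j else k, ?_, ?_⟩
  · intro a b hab
    rcases fin3_cases a with rfl | rfl | rfl <;> rcases fin3_cases b with rfl | rfl | rfl <;>
      first
        | exact absurd hab (by decide)
        | exact hij
        | exact lt_trans hij hjk
        | exact hjk
  · have h0 : p231 0 = 1 := by decide
    have h1 : p231 1 = 2 := by decide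
    have h2 : p231 2 = 0 := by decide
    intro a b
    rcases fin3_cases a with rfl | rfl | rfl <;> rcases fin3_cases b with rfl | rfl | rfl <;>
      simp only [h0, h1, h2, if_pos, if_neg, show ((0:Fin 3).val = 0) = True by simp,
        show ((1:Fin 3).val = 0) = False by simp, show ((1:Fin 3).val = 1) = True by simp,
        show ((2:Fin 3).val = 0) = False by simp, show ((2:Fin 3).val = 1) = False by simp,
        if_true, if_false]
    · exact iff_of_false (lt_irrefl _) (lt_irrefl _)
    · exact iff_of_true (by decide) h01
    · exact iff_of_false (by decide) (lt_asymm hki)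
    · exact iff_of_false (by decide) (lt_asymm h01)
    · exact iff_of_false (lt_irrefl _) (lt_irrefl _)
    · exact iff_of_false (by decide) (lt_asymm hkj)
    · exact iff_of_true (by decide) hki
    · exact iff_of_true (by decide) hkj
    · exact iff_of_false (lt_irrefl _) (lt_irrefl _)

lemma contains321_aux {n : ℕ} {π : Equiv.Perm (Fin n)} {i j k : Fin n}
    (hij : i < j) (hjk : j < k) (hki : π k < π i) (hkj : π k < π j)
    (h01 : π j < π i) : PermContains π p321 := by
  refine ⟨fun a => if a.val = 0 then i else if a.val = 1 then j else k, ?_, ?_⟩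
  · intro a b hab
    rcases fin3_cases a with rfl | rfl | rfl <;> rcases fin3_cases b with rfl | rfl | rfl <;>
      first
        | exact absurd hab (by decide)
        | exact hij
        | exact lt_trans hij hjk
        | exact hjk
  · have h0 : p321 0 = 2 := by decide
    have h1 : p321 1 = 1 := by decide
    have h2 : p321 2 = 0 := by decide
    intro a b
    rcases fin3_cases a with rfl | rfl | rfl <;> rcases fin3_cases b with rfl | rfl | rfl <;>
      simp only [h0, h1, h2, if_pos, if_neg, show ((0:Fin 3).val = 0) = True by simp,
        show ((1:Fin 3).val = 0) = False by simp, show ((1:Fin 3).val = 1) = True by simp,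
        show ((2:Fin 3).val = 0) = False by simp, show ((2:Fin 3).val = 1) = False by simp,
        if_true, if_false]
    · exact iff_of_false (lt_irrefl _) (lt_irrefl _)
    · exact iff_of_false (by decide) (lt_asymm h01)
    · exact iff_of_false (by decide) (lt_asymm hki)
    · exact iff_of_true (by decide) h01
    · exact iff_of_false (lt_irrefl _) (lt_irrefl _)
    · exact iff_of_false (by decide) (lt_asymm hkj)
    · exact iff_of_true (by decide) hki
    · exact iff_of_true (by decide) hkj
    · exact iff_of_false (lt_irrefl _) (lt_irrefl _)

lemma contains_of_badTriple {n : ℕ} {π : Equiv.Perm (Fin n)}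
    (h : BadTriple π) : PermContains π p231 ∨ PermContains π p321 := by
  obtain ⟨i, j, k, hij, hjk, hki, hkj⟩ := h
  have hπij : π i ≠ π j := fun he => absurd (π.injective he) (ne_of_lt hij)
  rcases lt_or_gt_of_ne hπij with hlt | hlt
  · exact Or.inl (contains231_aux hij hjk hki hkj hlt)
  · exact Or.inr (contains321_aux hij hjk hki hkj hlt)


section blk
variable {n : ℕ} (v : Fin (n+1)) (τ : Equiv.Perm (Fin (n - v)))

def bfun (k : Fin (n+1)) : Fin (n+1) :=
  if h0 : (k : ℕ) = 0 then v
  else if h2 : (k : ℕ) ≤ (v : ℕ) then ⟨(k : ℕ) - 1, by have := k.isLt; omega⟩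
  else ⟨(τ ⟨(k:ℕ) - ((v:ℕ)+1), by have := k.isLt; have := v.isLt; omega⟩ : ℕ) + ((v:ℕ)+1), by
    have := (τ ⟨(k:ℕ) - ((v:ℕ)+1), by have := k.isLt; have := v.isLt; omega⟩).isLt
    have := k.isLt; have := v.isLt; omega⟩

def binv (w : Fin (n+1)) : Fin (n+1) :=
  if h0 : (w : ℕ) = (v : ℕ) then ⟨0, Nat.succ_pos n⟩
  else if h2 : (w:ℕ) < (v : ℕ) then ⟨(w:ℕ)+1, by have := v.isLt; omega⟩
  else ⟨(τ.symm ⟨(w:ℕ) - ((v:ℕ)+1), by have := w.isLt; have := v.isLt; omega⟩ : ℕ) + ((v:ℕ)+1), by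
    have := (τ.symm ⟨(w:ℕ) - ((v:ℕ)+1), by have := w.isLt; have := v.isLt; omega⟩).isLt
    have := w.isLt; have := v.isLt; omega⟩

variable {v τ}

lemma bfun_val_zero {k : Fin (n+1)} (h : (k : ℕ) = 0) : (bfun v τ k : ℕ) = (v : ℕ) := by
  unfold bfun; rw [dif_pos h]

lemma bfun_val_low {k : Fin (n+1)} (h0 : (k : ℕ) ≠ 0) (h : (k : ℕ) ≤ (v : ℕ)) :
    (bfun v τ k : ℕ) = (k : ℕ) - 1 := by
  unfold bfun; rw [dif_neg h0, dif_pos h]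

lemma bfun_val_high {k : Fin (n+1)} (h : (v : ℕ) < (k : ℕ)) (hb : (k:ℕ) - ((v:ℕ)+1) < n - (v:ℕ)) :
    (bfun v τ k : ℕ) = (τ ⟨(k:ℕ) - ((v:ℕ)+1), hb⟩ : ℕ) + ((v:ℕ)+1) := by
  unfold bfun; rw [dif_neg (by omega), dif_neg (by omega)]

lemma binv_val_eq {w : Fin (n+1)} (h : (w : ℕ) = (v : ℕ)) : (binv v τ w : ℕ) = 0 := by
  unfold binv; rw [dif_pos h]

lemma binv_val_lt {w : Fin (n+1)} (h : (w : ℕ) < (v : ℕ)) : (binv v τ w : ℕ) = (w : ℕ) + 1 := by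
  unfold binv; rw [dif_neg (by omega), dif_pos h]

lemma binv_val_high {w : Fin (n+1)} (h : (v : ℕ) < (w : ℕ)) (hb : (w:ℕ) - ((v:ℕ)+1) < n - (v:ℕ)) :
    (binv v τ w : ℕ) = (τ.symm ⟨(w:ℕ) - ((v:ℕ)+1), hb⟩ : ℕ) + ((v:ℕ)+1) := by
  unfold binv; rw [dif_neg (by omega), dif_neg (by omega)]

variable (v τ)

/-- The block permutation: `0 ↦ v`, `k ↦ k-1` for `1 ≤ k ≤ v`, positions beyond `v`
permuted according to `τ` shifted by `v+1`. -/
def blk : Equiv.Perm (Fin (n+1)) where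
  toFun := bfun v τ
  invFun := binv v τ
  left_inv := by
    intro k
    apply Fin.ext
    rcases Nat.eq_zero_or_pos (k : ℕ) with h0 | h0
    · have h1 := bfun_val_zero (v := v) (τ := τ) h0
      rw [binv_val_eq h1, h0]
    · by_cases h2 : (k : ℕ) ≤ (v : ℕ)
      · have h1 := bfun_val_low (v := v) (τ := τ) (by omega) h2
        rw [binv_val_lt (by omega : (bfun v τ k : ℕ) < (v:ℕ)), h1]
        omega
      · have hb : (k:ℕ) - ((v:ℕ)+1) < n - (v:ℕ) := by have := k.isLt; have := v.isLt; omega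
        have h1 := bfun_val_high (v := v) (τ := τ) (by omega) hb
        have hx := (τ ⟨(k:ℕ) - ((v:ℕ)+1), hb⟩).isLt
        have hb2 : (bfun v τ k : ℕ) - ((v:ℕ)+1) < n - (v:ℕ) := by omega
        rw [binv_val_high (by omega) hb2]
        have he : (⟨(bfun v τ k : ℕ) - ((v:ℕ)+1), hb2⟩ : Fin (n - (v:ℕ))) =
            τ ⟨(k:ℕ) - ((v:ℕ)+1), hb⟩ := Fin.ext (by simp only [Fin.val_mk]; omega)
        rw [he, Equiv.symm_apply_apply]
        simp only [Fin.val_mk]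
        omega
  right_inv := by
    intro w
    apply Fin.ext
    by_cases h0 : (w : ℕ) = (v : ℕ)
    · have h1 := binv_val_eq (v := v) (τ := τ) h0
      rw [bfun_val_zero h1, h0]
    · by_cases h2 : (w : ℕ) < (v : ℕ)
      · have h1 := binv_val_lt (v := v) (τ := τ) h2
        rw [bfun_val_low (by omega) (by omega), h1]
        omega
      · have hb : (w:ℕ) - ((v:ℕ)+1) < n - (v:ℕ) := by have := w.isLt; have := v.isLt; omega
        have h1 := binv_val_high (v := v) (τ := τ) (by omega) hb
        have hx := (τ.symm ⟨(w:ℕ) - ((v:ℕ)+1), hb⟩).isLt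
        have hb2 : (binv v τ w : ℕ) - ((v:ℕ)+1) < n - (v:ℕ) := by omega
        rw [bfun_val_high (by omega) hb2]
        have he : (⟨(binv v τ w : ℕ) - ((v:ℕ)+1), hb2⟩ : Fin (n - (v:ℕ))) =
            τ.symm ⟨(w:ℕ) - ((v:ℕ)+1), hb⟩ := Fin.ext (by simp only [Fin.val_mk]; omega)
        rw [he, Equiv.apply_symm_apply]
        simp only [Fin.val_mk]
        omega

variable {v τ}

lemma blk_val_zero {k : Fin (n+1)} (h : (k : ℕ) = 0) : (blk v τ k : ℕ) = (v : ℕ) :=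
  bfun_val_zero h

lemma blk_val_low {k : Fin (n+1)} (h0 : (k : ℕ) ≠ 0) (h : (k : ℕ) ≤ (v : ℕ)) :
    (blk v τ k : ℕ) = (k : ℕ) - 1 := bfun_val_low h0 h

lemma blk_val_high {k : Fin (n+1)} (h : (v : ℕ) < (k : ℕ)) (hb : (k:ℕ) - ((v:ℕ)+1) < n - (v:ℕ)) :
    (blk v τ k : ℕ) = (τ ⟨(k:ℕ) - ((v:ℕ)+1), hb⟩ : ℕ) + ((v:ℕ)+1) := bfun_val_high h hb

end blk

section blk2
variable {n : ℕ} {v : Fin (n+1)} {τ : Equiv.Perm (Fin (n - (v:ℕ)))}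

lemma goodPerm_blk (hτ : GoodPerm τ) : GoodPerm (blk v τ) := by
  intro k
  rcases Nat.eq_zero_or_pos (k : ℕ) with h0 | h0
  · omega
  · by_cases h2 : (k : ℕ) ≤ (v : ℕ)
    · rw [blk_val_low (by omega) h2]; omega
    · have hb : (k:ℕ) - ((v:ℕ)+1) < n - (v:ℕ) := by have := k.isLt; have := v.isLt; omega
      rw [blk_val_high (by omega) hb]
      have := hτ ⟨(k:ℕ) - ((v:ℕ)+1), hb⟩
      simp only [Fin.val_mk] at this
      omega

lemma goodPerm_of_blk (h : GoodPerm (blk v τ)) : GoodPerm τ := by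
  intro x
  have hx := x.isLt
  have hv := v.isLt
  have hk : (x:ℕ) + (v:ℕ) + 1 < n + 1 := by omega
  have := h ⟨(x:ℕ) + (v:ℕ) + 1, hk⟩
  have hb : ((x:ℕ) + (v:ℕ) + 1) - ((v:ℕ)+1) < n - (v:ℕ) := by omega
  rw [blk_val_high (k := ⟨(x:ℕ) + (v:ℕ) + 1, hk⟩) (by simp only [Fin.val_mk]; omega) hb] at this
  have he : (⟨((x:ℕ) + (v:ℕ) + 1) - ((v:ℕ)+1), hb⟩ : Fin (n - (v:ℕ))) = x :=
    Fin.ext (by simp only [Fin.val_mk]; omega)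
  rw [he] at this
  simp only [Fin.val_mk] at this
  omega

lemma blk_val_shift (x : Fin (n - (v:ℕ))) (hk : (x:ℕ) + (v:ℕ) + 1 < n + 1) :
    (blk v τ ⟨(x:ℕ) + (v:ℕ) + 1, hk⟩ : ℕ) = (τ x : ℕ) + (v:ℕ) + 1 := by
  have hb : ((x:ℕ) + (v:ℕ) + 1) - ((v:ℕ)+1) < n - (v:ℕ) := by have := x.isLt; omega
  rw [blk_val_high (by simp only [Fin.val_mk]; omega) hb]
  have he : (⟨((x:ℕ) + (v:ℕ) + 1) - ((v:ℕ)+1), hb⟩ : Fin (n - (v:ℕ))) = x :=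
    Fin.ext (by simp only [Fin.val_mk]; omega)
  rw [he]
  omega

open Classical in
lemma card_pred_blk (P : ℕ → ℕ → Prop)
    (hshift : ∀ a b c : ℕ, P a b ↔ P (a+c) (b+c)) (hmid : ∀ a : ℕ, ¬ P (a+1) a) :
    Nat.card {k : Fin (n+1) // P (k:ℕ) ((blk v τ k : Fin (n+1)) : ℕ)} =
      Nat.card {x : Fin (n - (v:ℕ)) // P (x:ℕ) ((τ x : Fin (n - (v:ℕ))) : ℕ)} +
        (if P 0 (v:ℕ) then 1 else 0) := by
  classical
  -- common facts
  have hvn := v.isLt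
  by_cases hz : P 0 (v:ℕ)
  · rw [if_pos hz]
    have hb : ∀ x : Fin (n - (v:ℕ)), (x:ℕ) + (v:ℕ) + 1 < n + 1 := by
      intro x; have := x.isLt; omega
    set g : {x : Fin (n - (v:ℕ)) // P (x:ℕ) ((τ x : Fin (n - (v:ℕ))) : ℕ)} ⊕ Unit →
        {k : Fin (n+1) // P (k:ℕ) ((blk v τ k : Fin (n+1)) : ℕ)} :=
      fun s => match s with
      | Sum.inl ⟨x, hx⟩ => ⟨⟨(x:ℕ) + (v:ℕ) + 1, hb x⟩, by
          rw [blk_val_shift x (hb x)]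
          simp only [Fin.val_mk]
          exact (hshift _ _ ((v:ℕ)+1)).mp hx⟩
      | Sum.inr _ => ⟨⟨0, Nat.succ_pos n⟩, by
          rw [blk_val_zero (by simp)]; simpa using hz⟩
      with hg
    have hginj : Function.Injective g := by
      rintro (⟨x, hx⟩ | ⟨⟩) (⟨y, hy⟩ | ⟨⟩) hxy
      · simp only [hg, Subtype.mk.injEq, Fin.mk.injEq] at hxy
        have : x = y := Fin.ext (by omega)
        subst this; rfl
      · simp only [hg, Subtype.mk.injEq, Fin.mk.injEq] at hxy
        omega
      · simp only [hg, Subtype.mk.injEq, Fin.mk.injEq] at hxy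
        omega
      · rfl
    have hgsurj : Function.Surjective g := by
      rintro ⟨k, hk⟩
      rcases Nat.eq_zero_or_pos (k:ℕ) with h0 | h0
      · exact ⟨Sum.inr (), Subtype.ext (Fin.ext (by simp [hg, h0]))⟩
      · by_cases h2 : (k:ℕ) ≤ (v:ℕ)
        · exfalso
          rw [blk_val_low (by omega) h2] at hk
          have h3 : (k:ℕ) = ((k:ℕ) - 1) + 1 := by omega
          rw [h3] at hk
          exact hmid _ hk
        · have hbk : (k:ℕ) - ((v:ℕ)+1) < n - (v:ℕ) := by have := k.isLt; omega
          set x : Fin (n - (v:ℕ)) := ⟨(k:ℕ) - ((v:ℕ)+1), hbk⟩ with hxdef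
          have hkx : (x:ℕ) + (v:ℕ) + 1 = (k:ℕ) := by simp only [hxdef, Fin.val_mk]; omega
          have hk2 : P ((x:ℕ) + ((v:ℕ)+1)) ((τ x : ℕ) + ((v:ℕ)+1)) := by
            have e2 : (blk v τ k : ℕ) = (τ x : ℕ) + (v:ℕ) + 1 := by
              have := blk_val_shift (τ := τ) x (hb x)
              have he : (⟨(x:ℕ) + (v:ℕ) + 1, hb x⟩ : Fin (n+1)) = k := Fin.ext hkx
              rwa [he] at this
            rw [e2] at hk
            have e1 : (k:ℕ) = (x:ℕ) + ((v:ℕ)+1) := by omega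
            rw [e1] at hk
            rwa [add_assoc] at hk
          have hx : P (x:ℕ) (τ x : ℕ) := (hshift _ _ ((v:ℕ)+1)).mpr hk2
          exact ⟨Sum.inl ⟨x, hx⟩, Subtype.ext (Fin.ext (by simp only [hg, Fin.val_mk]; omega))⟩
    rw [← Nat.card_eq_of_bijective g ⟨hginj, hgsurj⟩, Nat.card_sum]
    simp
  · rw [if_neg hz]
    have hb : ∀ x : Fin (n - (v:ℕ)), (x:ℕ) + (v:ℕ) + 1 < n + 1 := by
      intro x; have := x.isLt; omega
    set g : {x : Fin (n - (v:ℕ)) // P (x:ℕ) ((τ x : Fin (n - (v:ℕ))) : ℕ)} →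
        {k : Fin (n+1) // P (k:ℕ) ((blk v τ k : Fin (n+1)) : ℕ)} :=
      fun s => ⟨⟨(s.1:ℕ) + (v:ℕ) + 1, hb s.1⟩, by
          rw [blk_val_shift s.1 (hb s.1)]
          simp only [Fin.val_mk]
          exact (hshift _ _ ((v:ℕ)+1)).mp s.2⟩
      with hg
    have hginj : Function.Injective g := by
      rintro ⟨x, hx⟩ ⟨y, hy⟩ hxy
      simp only [hg, Subtype.mk.injEq, Fin.mk.injEq] at hxy
      have : x = y := Fin.ext (by omega)
      subst this; rfl
    have hgsurj : Function.Surjective g := by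
      rintro ⟨k, hk⟩
      rcases Nat.eq_zero_or_pos (k:ℕ) with h0 | h0
      · exfalso
        rw [blk_val_zero h0] at hk
        rw [h0] at hk
        exact hz hk
      · by_cases h2 : (k:ℕ) ≤ (v:ℕ)
        · exfalso
          rw [blk_val_low (by omega) h2] at hk
          have h3 : (k:ℕ) = ((k:ℕ) - 1) + 1 := by omega
          rw [h3] at hk
          exact hmid _ hk
        · have hbk : (k:ℕ) - ((v:ℕ)+1) < n - (v:ℕ) := by have := k.isLt; omega
          set x : Fin (n - (v:ℕ)) := ⟨(k:ℕ) - ((v:ℕ)+1), hbk⟩ with hxdef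
          have hkx : (x:ℕ) + (v:ℕ) + 1 = (k:ℕ) := by simp only [hxdef, Fin.val_mk]; omega
          have hk2 : P ((x:ℕ) + ((v:ℕ)+1)) ((τ x : ℕ) + ((v:ℕ)+1)) := by
            have e2 : (blk v τ k : ℕ) = (τ x : ℕ) + (v:ℕ) + 1 := by
              have := blk_val_shift (τ := τ) x (hb x)
              have he : (⟨(x:ℕ) + (v:ℕ) + 1, hb x⟩ : Fin (n+1)) = k := Fin.ext hkx
              rwa [he] at this
            rw [e2] at hk
            have e1 : (k:ℕ) = (x:ℕ) + ((v:ℕ)+1) := by omega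
            rw [e1] at hk
            rwa [add_assoc] at hk
          have hx : P (x:ℕ) (τ x : ℕ) := (hshift _ _ ((v:ℕ)+1)).mpr hk2
          exact ⟨⟨x, hx⟩, Subtype.ext (Fin.ext (by simp only [hg, Fin.val_mk]; omega))⟩
    rw [← Nat.card_eq_of_bijective g ⟨hginj, hgsurj⟩]
    omega

lemma fpCount_blk : fpCount (blk v τ) = fpCount τ + (if (v:ℕ) = 0 then 1 else 0) := by
  have h1 : fpCount (blk v τ) =
      Nat.card {k : Fin (n+1) // ((blk v τ k : Fin (n+1)) : ℕ) = (k:ℕ)} :=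
    Nat.card_congr (Equiv.subtypeEquivRight (fun k => Fin.ext_iff))
  have h2 : fpCount τ =
      Nat.card {x : Fin (n - (v:ℕ)) // ((τ x : Fin (n - (v:ℕ))) : ℕ) = (x:ℕ)} :=
    Nat.card_congr (Equiv.subtypeEquivRight (fun k => Fin.ext_iff))
  rw [h1, h2]
  have := card_pred_blk (v := v) (τ := τ) (fun a b => b = a)
    (by intro a b c; omega) (by intro a; omega)
  rw [this]
  congr 1
  by_cases hv : (v:ℕ) = 0 <;> simp [hv]

lemma excCount_blk : excCount (blk v τ) = excCount τ + (if (v:ℕ) = 0 then 0 else 1) := by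
  have h1 : excCount (blk v τ) =
      Nat.card {k : Fin (n+1) // (k:ℕ) < ((blk v τ k : Fin (n+1)) : ℕ)} :=
    Nat.card_congr (Equiv.subtypeEquivRight (fun k => Fin.lt_def))
  have h2 : excCount τ =
      Nat.card {x : Fin (n - (v:ℕ)) // (x:ℕ) < ((τ x : Fin (n - (v:ℕ))) : ℕ)} :=
    Nat.card_congr (Equiv.subtypeEquivRight (fun k => Fin.lt_def))
  rw [h1, h2]
  have := card_pred_blk (v := v) (τ := τ) (fun a b => a < b)
    (by intro a b c; omega) (by intro a; omega)
  rw [this]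
  congr 1
  by_cases hv : (v:ℕ) = 0 <;> simp [hv] <;> exact fun h => hv (by rw [h]; simp)

end blk2

section structure_lemma
variable {n : ℕ}

lemma good_low_vals {π : Equiv.Perm (Fin (n+1))} (h : GoodPerm π) :
    ∀ m : ℕ, ∀ hm : m < n + 1, 1 ≤ m → m ≤ (π ⟨0, Nat.succ_pos n⟩ : ℕ) →
      (π ⟨m, hm⟩ : ℕ) = m - 1 := by
  intro m
  induction m using Nat.strong_induction_on with
  | _ m IH =>
    intro hm h1 h2
    set w : Fin (n+1) := ⟨m - 1, by omega⟩ with hw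
    set p : Fin (n+1) := π.symm w with hp
    have hπp : π p = w := π.apply_symm_apply w
    have hple : (p : ℕ) ≤ m := by
      have := h p
      rw [hπp] at this
      simp only [hw, Fin.val_mk] at this
      omega
    have hp0 : (p : ℕ) ≠ 0 := by
      intro h0
      have : p = ⟨0, Nat.succ_pos n⟩ := Fin.ext h0
      rw [this] at hπp
      have := congrArg Fin.val hπp
      simp only [hw, Fin.val_mk] at this
      omega
    have hpm : (p : ℕ) = m := by
      by_contra hne
      have hlt : (p : ℕ) < m := by omega
      have := IH (p : ℕ) hlt p.isLt (by omega) (by omega)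
      have hpe : (⟨(p:ℕ), p.isLt⟩ : Fin (n+1)) = p := Fin.ext rfl
      rw [hpe, hπp] at this
      simp only [hw, Fin.val_mk] at this
      omega
    have : (⟨m, hm⟩ : Fin (n+1)) = p := Fin.ext hpm.symm
    rw [this, hπp]

lemma good_high_vals {π : Equiv.Perm (Fin (n+1))} (h : GoodPerm π)
    (k : Fin (n+1)) (hk : (π ⟨0, Nat.succ_pos n⟩ : ℕ) < (k : ℕ)) :
    (π ⟨0, Nat.succ_pos n⟩ : ℕ) < (π k : ℕ) := by
  by_contra hle
  push_neg at hle
  rcases Nat.lt_or_ge (π k : ℕ) (π ⟨0, Nat.succ_pos n⟩ : ℕ) with hlt | hge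
  · set w : ℕ := (π k : ℕ) with hwdef
    have hm : w + 1 < n + 1 := by
      have := (π ⟨0, Nat.succ_pos n⟩).isLt; omega
    have := good_low_vals h (w + 1) hm (by omega) (by omega)
    have hke : (⟨w + 1, hm⟩ : Fin (n+1)) = k := by
      apply π.injective
      apply Fin.ext
      rw [this]
      omega
    have := congrArg Fin.val hke
    simp only [Fin.val_mk] at this
    omega
  · have heq : (π k : ℕ) = (π ⟨0, Nat.succ_pos n⟩ : ℕ) := by omega
    have : k = ⟨0, Nat.succ_pos n⟩ := π.injective (Fin.ext heq)
    have := congrArg Fin.val this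
    simp only [Fin.val_mk] at this
    omega

lemma exists_blk_of_good {π : Equiv.Perm (Fin (n+1))} (h : GoodPerm π) :
    ∃ (v : Fin (n+1)) (τ : Equiv.Perm (Fin (n - (v:ℕ)))), GoodPerm τ ∧ π = blk v τ := by
  set v : Fin (n+1) := π ⟨0, Nat.succ_pos n⟩ with hvdef
  have hbnd : ∀ x : Fin (n - (v:ℕ)), (x:ℕ) + (v:ℕ) + 1 < n + 1 := by
    intro x; have := x.isLt; have := v.isLt; omega
  have hπhigh : ∀ x : Fin (n - (v:ℕ)),
      (v:ℕ) < (π ⟨(x:ℕ) + (v:ℕ) + 1, hbnd x⟩ : ℕ) := by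
    intro x
    exact good_high_vals h _ (by simp only [Fin.val_mk]; omega)
  set g : Fin (n - (v:ℕ)) → Fin (n - (v:ℕ)) := fun x =>
    ⟨(π ⟨(x:ℕ) + (v:ℕ) + 1, hbnd x⟩ : ℕ) - ((v:ℕ)+1), by
      have := (π ⟨(x:ℕ) + (v:ℕ) + 1, hbnd x⟩).isLt
      have := hπhigh x
      omega⟩ with hgdef
  have hginj : Function.Injective g := by
    intro x y hxy
    simp only [hgdef, Fin.mk.injEq] at hxy
    have hx := hπhigh x
    have hy := hπhigh y
    have : π ⟨(x:ℕ) + (v:ℕ) + 1, hbnd x⟩ = π ⟨(y:ℕ) + (v:ℕ) + 1, hbnd y⟩ :=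
      Fin.ext (by omega)
    have := π.injective this
    have := congrArg Fin.val this
    simp only [Fin.val_mk] at this
    exact Fin.ext (by omega)
  set τ : Equiv.Perm (Fin (n - (v:ℕ))) :=
    Equiv.ofBijective g (Finite.injective_iff_bijective.mp hginj) with hτdef
  have hτapp : ∀ x, τ x = g x := fun x => rfl
  refine ⟨v, τ, ?_, ?_⟩
  · intro x
    rw [hτapp]
    have h1 := h ⟨(x:ℕ) + (v:ℕ) + 1, hbnd x⟩
    simp only [Fin.val_mk] at h1
    have h2 := hπhigh x
    simp only [hgdef, Fin.val_mk]
    omega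
  · apply Equiv.ext
    intro k
    apply Fin.ext
    rcases Nat.eq_zero_or_pos (k:ℕ) with h0 | h0
    · rw [blk_val_zero h0]
      have : k = ⟨0, Nat.succ_pos n⟩ := Fin.ext h0
      rw [this, ← hvdef]
    · by_cases h2 : (k : ℕ) ≤ (v : ℕ)
      · rw [blk_val_low (by omega) h2]
        have := good_low_vals h (k:ℕ) k.isLt (by omega) h2
        have hke : (⟨(k:ℕ), k.isLt⟩ : Fin (n+1)) = k := Fin.ext rfl
        rw [hke] at this
        rw [this]
      · have hb : (k:ℕ) - ((v:ℕ)+1) < n - (v:ℕ) := by have := k.isLt; have := v.isLt; omega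
        rw [blk_val_high (by omega) hb]
        set x : Fin (n - (v:ℕ)) := ⟨(k:ℕ) - ((v:ℕ)+1), hb⟩ with hxdef
        rw [hτapp]
        have hke : (⟨(x:ℕ) + (v:ℕ) + 1, hbnd x⟩ : Fin (n+1)) = k :=
          Fin.ext (by simp only [hxdef, Fin.val_mk]; omega)
        have hx := hπhigh x
        rw [hke] at hx
        simp only [hgdef, Fin.val_mk]
        rw [hke]
        omega

end structure_lemma

lemma nat_card_sigma {m : ℕ} (T : Fin m → Type) [∀ v, Finite (T v)] :
    Nat.card (Σ v, T v) = ∑ v, Nat.card (T v) := by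
  classical
  letI : ∀ v, Fintype (T v) := fun v => Fintype.ofFinite _
  simp only [Nat.card_eq_fintype_card]
  exact Fintype.card_sigma

lemma card_good_rec (i j n : ℕ) :
    Nat.card {π : Equiv.Perm (Fin (n+1)) // GoodPerm π ∧ fpCount π = i ∧ excCount π = j} =
      ∑ v : Fin (n+1), Nat.card {τ : Equiv.Perm (Fin (n - (v:ℕ))) // GoodPerm τ ∧
        fpCount τ + (if (v:ℕ) = 0 then 1 else 0) = i ∧
        excCount τ + (if (v:ℕ) = 0 then 0 else 1) = j} := by
  classical
  rw [← nat_card_sigma]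
  refine ((Nat.card_eq_of_bijective (fun s => ⟨blk s.1 s.2.1, goodPerm_blk s.2.2.1,
      by rw [fpCount_blk]; exact s.2.2.2.1,
      by rw [excCount_blk]; exact s.2.2.2.2⟩) ⟨?_, ?_⟩).symm)
  · rintro ⟨v, τ, hτ⟩ ⟨v', τ', hτ'⟩ hEq
    simp only [Subtype.mk.injEq] at hEq
    have hv : v = v' := by
      have h0 := congrArg (fun e : Equiv.Perm (Fin (n+1)) => (e ⟨0, Nat.succ_pos n⟩ : ℕ)) hEq
      rw [blk_val_zero (k := ⟨0, Nat.succ_pos n⟩) rfl, blk_val_zero (k := ⟨0, Nat.succ_pos n⟩) rfl] at h0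
      exact Fin.ext h0
    subst hv
    have hτeq : τ = τ' := by
      apply Equiv.ext
      intro x
      apply Fin.ext
      have hb : (x:ℕ) + (v:ℕ) + 1 < n + 1 := by have := x.isLt; have := v.isLt; omega
      have h1 := congrArg (fun e : Equiv.Perm (Fin (n+1)) =>
        (e ⟨(x:ℕ) + (v:ℕ) + 1, hb⟩ : ℕ)) hEq
      rw [blk_val_shift x hb, blk_val_shift x hb] at h1
      omega
    subst hτeq
    rfl
  · rintro ⟨π, hG, hfp, hexc⟩
    obtain ⟨v, τ, hτ, rfl⟩ := exists_blk_of_good hG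
    rw [fpCount_blk] at hfp
    rw [excCount_blk] at hexc
    exact ⟨⟨v, τ, hτ, hfp, hexc⟩, rfl⟩

noncomputable def Acount (i j n : ℕ) : ℕ :=
  Nat.card {π : Equiv.Perm (Fin n) // GoodPerm π ∧ fpCount π = i ∧ excCount π = j}

lemma fpCount_zero (π : Equiv.Perm (Fin 0)) : fpCount π = 0 := by
  have : IsEmpty {i : Fin 0 // π i = i} := ⟨fun x => x.1.elim0⟩
  exact Nat.card_of_isEmpty

lemma excCount_zero (π : Equiv.Perm (Fin 0)) : excCount π = 0 := by
  have : IsEmpty {i : Fin 0 // i < π i} := ⟨fun x => x.1.elim0⟩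
  exact Nat.card_of_isEmpty

lemma Acount_zero (i j : ℕ) : Acount i j 0 = if i = 0 ∧ j = 0 then 1 else 0 := by
  by_cases h : i = 0 ∧ j = 0
  · obtain ⟨rfl, rfl⟩ := h
    rw [if_pos ⟨rfl, rfl⟩]
    have hall : ∀ π : Equiv.Perm (Fin 0), GoodPerm π ∧ fpCount π = 0 ∧ excCount π = 0 :=
      fun π => ⟨fun k => k.elim0, fpCount_zero π, excCount_zero π⟩
    rw [Acount, Nat.card_congr (Equiv.subtypeUnivEquiv hall)]
    simp [Nat.card_eq_fintype_card]
  · rw [if_neg h]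
    have : IsEmpty {π : Equiv.Perm (Fin 0) // GoodPerm π ∧ fpCount π = i ∧ excCount π = j} := by
      constructor
      rintro ⟨π, _, h2, h3⟩
      rw [fpCount_zero π] at h2
      rw [excCount_zero π] at h3
      exact h ⟨h2.symm, h3.symm⟩
    exact Nat.card_of_isEmpty

lemma Acount_succ (i j n : ℕ) :
    Acount i j (n+1) =
      (if i = 0 then 0 else Acount (i-1) j n) +
      (if j = 0 then 0 else ∑ m ∈ Finset.range n, Acount i (j-1) m) := by
  classical
  rw [Acount, card_good_rec i j n, Fin.sum_univ_succ]
  simp only [Fin.val_zero, Fin.val_succ, Nat.sub_zero]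
  congr 1
  · -- head term, v = 0
    by_cases hi : i = 0
    · subst hi
      rw [if_pos rfl]
      refine Nat.card_eq_zero.mpr (Or.inl ?_)
      constructor
      rintro ⟨τ, _, h2, _⟩
      revert h2
      simp
    · rw [if_neg hi]
      apply Nat.card_congr
      apply Equiv.subtypeEquivRight
      intro τ
      constructor
      · rintro ⟨h1, h2, h3⟩
        simp only [if_true] at h2 h3
        exact ⟨h1, by omega, by omega⟩
      · rintro ⟨h1, h2, h3⟩
        simp only [if_true]
        exact ⟨h1, by omega, by omega⟩
  · -- tail terms, v = w+1
    by_cases hj : j = 0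
    · subst hj
      rw [if_pos rfl]
      apply Finset.sum_eq_zero
      intro w _
      have : IsEmpty {τ : Equiv.Perm (Fin (n - ((w:ℕ)+1))) // GoodPerm τ ∧
          fpCount τ + (if (w:ℕ)+1 = 0 then 1 else 0) = i ∧
          excCount τ + (if (w:ℕ)+1 = 0 then 0 else 1) = 0} := by
        constructor
        rintro ⟨τ, _, _, h3⟩
        rw [if_neg (by omega)] at h3
        omega
      exact Nat.card_of_isEmpty
    · rw [if_neg hj]
      have hterm : ∀ w : Fin n, Nat.card {τ : Equiv.Perm (Fin (n - ((w:ℕ)+1))) // GoodPerm τ ∧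
          fpCount τ + (if (w:ℕ)+1 = 0 then 1 else 0) = i ∧
          excCount τ + (if (w:ℕ)+1 = 0 then 0 else 1) = j} = Acount i (j-1) (n - ((w:ℕ)+1)) := by
        intro w
        apply Nat.card_congr
        apply Equiv.subtypeEquivRight
        intro τ
        constructor
        · rintro ⟨h1, h2, h3⟩
          rw [if_neg (by omega)] at h2 h3
          exact ⟨h1, by omega, by omega⟩
        · rintro ⟨h1, h2, h3⟩
          rw [if_neg (by omega), if_neg (by omega)]
          exact ⟨h1, by omega, by omega⟩
      rw [Finset.sum_congr rfl (fun w _ => hterm w)]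
      rw [Fin.sum_univ_eq_sum_range (fun m => Acount i (j-1) (n - (m+1))) n]
      rw [Finset.sum_congr rfl (fun m hm => by rw [show n - (m+1) = n - 1 - m by omega])]
      rw [Finset.sum_range_reflect]

lemma Acount_key (i j n : ℕ) :
    (Acount i j n : ℤ)
      - (if 1 ≤ n then (Acount i j (n-1) : ℤ) else 0)
      - (if 1 ≤ i ∧ 1 ≤ n then (Acount (i-1) j (n-1) : ℤ) else 0)
      + (if 1 ≤ i ∧ 2 ≤ n then (Acount (i-1) j (n-2) : ℤ) else 0)
      - (if 1 ≤ j ∧ 2 ≤ n then (Acount i (j-1) (n-2) : ℤ) else 0)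
    = (if i = 0 ∧ j = 0 ∧ n = 0 then 1 else 0)
      - (if i = 0 ∧ j = 0 ∧ n = 1 then 1 else 0) := by
  by_cases hn0 : n = 0
  · subst hn0
    rw [if_neg (by omega : ¬(1:ℕ) ≤ 0), if_neg (by omega : ¬(1 ≤ i ∧ (1:ℕ) ≤ 0)),
      if_neg (by omega : ¬(1 ≤ i ∧ (2:ℕ) ≤ 0)), if_neg (by omega : ¬(1 ≤ j ∧ (2:ℕ) ≤ 0)),
      if_neg (by omega : ¬(i = 0 ∧ j = 0 ∧ (0:ℕ) = 1)), Acount_zero]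
    split_ifs <;> (try push_cast) <;> (try simp_all) <;> omega
  · by_cases hn1 : n = 1
    · subst hn1
      rw [show (1:ℕ)-1 = 0 from rfl]
      have e1 : Acount i j 1 = (if i = 0 then 0 else Acount (i-1) j 0) := by
        have := Acount_succ i j 0
        simpa using this
      rw [if_pos (le_refl 1), if_neg (by omega : ¬(1 ≤ i ∧ (2:ℕ) ≤ 1)),
        if_neg (by omega : ¬(1 ≤ j ∧ (2:ℕ) ≤ 1)),
        if_neg (by omega : ¬(i = 0 ∧ j = 0 ∧ (1:ℕ) = 0)), e1]
      simp only [Acount_zero]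
      split_ifs <;> (try push_cast) <;> (try simp_all) <;> omega
    · obtain ⟨m, rfl⟩ : ∃ m, n = m + 2 := ⟨n - 2, by omega⟩
      have e2 := Acount_succ i j (m+1)
      rw [show m + 1 + 1 = m + 2 by omega] at e2
      have e1 := Acount_succ i j m
      have eB := Finset.sum_range_succ (fun x => Acount i (j-1) x) m
      rw [show m+2-1 = m+1 from rfl, show m+2-2 = m from rfl]
      rw [if_neg (by omega : ¬(i = 0 ∧ j = 0 ∧ m+2 = 0)),
        if_neg (by omega : ¬(i = 0 ∧ j = 0 ∧ m+2 = 1))]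
      rcases Nat.eq_zero_or_pos i with hi | hi <;> rcases Nat.eq_zero_or_pos j with hj | hj
      · subst hi; subst hj
        simp only [if_pos rfl] at e1 e2
        split_ifs <;> (try push_cast) <;> (try simp_all) <;> omega
      · subst hi
        rw [if_pos rfl, if_neg (by omega)] at e1 e2
        split_ifs <;> (try push_cast) <;> (try simp_all) <;> omega
      · subst hj
        rw [if_neg (by omega), if_pos rfl] at e1 e2
        split_ifs <;> (try push_cast) <;> (try simp_all) <;> omega
      · rw [if_neg (by omega), if_neg (by omega)] at e1 e2
        split_ifs <;> omega


/-- (1 − (x+1)z + (x−q)z²)·F_{{231,321}}(x,q,z) = 1 − z. -/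
theorem F231_321_identity :
    (1 - (vx + 1) * vz + (vx - vq) * vz ^ 2) * patternGF {p231, p321} =
      1 - vz := by
  classical
  have havoid : ∀ (N : ℕ) (π : Equiv.Perm (Fin N)),
      (∀ σ ∈ ({p231, p321} : Set (Equiv.Perm (Fin 3))), PermAvoids π σ) ↔ GoodPerm π := by
    intro N π
    constructor
    · intro h
      by_contra hG
      rcases contains_of_badTriple (badTriple_of_not_good hG) with hc | hc
      · exact h p231 (Set.mem_insert _ _) hc
      · exact h p321 (Set.mem_insert_of_mem _ rfl) hc
    · intro hG σ hσ hc
      apply not_badTriple_of_good hG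
      simp only [Set.mem_insert_iff, Set.mem_singleton_iff] at hσ
      rcases hσ with rfl | rfl
      · exact badTriple_of_contains_231 hc
      · exact badTriple_of_contains_321 hc
  have hGF : ∀ d : Fin 3 →₀ ℕ, (coeff d) (patternGF {p231, p321}) =
      (Acount (d 0) (d 1) (d 2) : ℤ) := by
    intro d
    have h1 : (coeff d) (patternGF {p231, p321}) = patternGF {p231, p321} d := rfl
    rw [h1]
    show ((Nat.card {π : Equiv.Perm (Fin (d 2)) //
        (∀ σ ∈ ({p231, p321} : Set (Equiv.Perm (Fin 3))), PermAvoids π σ) ∧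
          fpCount π = d 0 ∧ excCount π = d 1} : ℕ) : ℤ) = _
    congr 1
    apply Nat.card_congr
    apply Equiv.subtypeEquivRight
    intro π
    rw [havoid (d 2) π]
  apply MvPowerSeries.ext
  intro d
  have e1 : vz = monomial (Finsupp.single 2 1) 1 := rfl
  have e2 : vx = monomial (Finsupp.single 0 1) 1 := rfl
  have e3 : vq = monomial (Finsupp.single 1 1) 1 := rfl
  have epow : vz ^ 2 = monomial (Finsupp.single 2 2) 1 := X_pow_eq 2 2
  have m1 : monomial (Finsupp.single 0 1 + Finsupp.single 2 1) (1:ℤ) = vx * vz := by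
    rw [e2, e1, monomial_mul_monomial, one_mul]
  have m2 : monomial (Finsupp.single 0 1 + Finsupp.single 2 2) (1:ℤ) = vx * vz ^ 2 := by
    rw [e2, epow, monomial_mul_monomial, one_mul]
  have m3 : monomial (Finsupp.single 1 1 + Finsupp.single 2 2) (1:ℤ) = vq * vz ^ 2 := by
    rw [e3, epow, monomial_mul_monomial, one_mul]
  have hring : (1 - (vx + 1) * vz + (vx - vq) * vz ^ 2) * patternGF {p231, p321}
      = patternGF {p231, p321}
        - monomial (Finsupp.single 2 1) 1 * patternGF {p231, p321}
        - monomial (Finsupp.single 0 1 + Finsupp.single 2 1) 1 * patternGF {p231, p321}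
        + monomial (Finsupp.single 0 1 + Finsupp.single 2 2) 1 * patternGF {p231, p321}
        - monomial (Finsupp.single 1 1 + Finsupp.single 2 2) 1 * patternGF {p231, p321} := by
    rw [m1, m2, m3, ← e1]
    ring
  rw [hring]
  simp only [map_sub, map_add]
  have hcm : ∀ e : Fin 3 →₀ ℕ,
      (coeff d) (monomial e 1 * patternGF {p231, p321}) =
        if e ≤ d then (Acount ((d-e) 0) ((d-e) 1) ((d-e) 2) : ℤ) else 0 := by
    intro e
    rw [coeff_monomial_mul]
    split_ifs with h
    · rw [one_mul, hGF]
    · rfl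
  rw [hcm, hcm, hcm, hcm, hGF]
  rw [MvPowerSeries.coeff_one]
  rw [show (vz : MvPowerSeries (Fin 3) ℤ) = X 2 from rfl, MvPowerSeries.coeff_X]
  -- component values of subtractions
  have hsub : ∀ (e : Fin 3 →₀ ℕ) (a : Fin 3), (d - e) a = d a - e a := fun e a =>
    Finsupp.tsub_apply d e a
  have s20 : (Finsupp.single (2:Fin 3) 1 : Fin 3 →₀ ℕ) 0 = 0 :=
    Finsupp.single_eq_of_ne (by decide)
  have s21 : (Finsupp.single (2:Fin 3) 1 : Fin 3 →₀ ℕ) 1 = 0 :=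
    Finsupp.single_eq_of_ne (by decide)
  have s22 : (Finsupp.single (2:Fin 3) 1 : Fin 3 →₀ ℕ) 2 = 1 := Finsupp.single_eq_same
  have t20 : (Finsupp.single (2:Fin 3) 2 : Fin 3 →₀ ℕ) 0 = 0 :=
    Finsupp.single_eq_of_ne (by decide)
  have t21 : (Finsupp.single (2:Fin 3) 2 : Fin 3 →₀ ℕ) 1 = 0 :=
    Finsupp.single_eq_of_ne (by decide)
  have t22 : (Finsupp.single (2:Fin 3) 2 : Fin 3 →₀ ℕ) 2 = 2 := Finsupp.single_eq_same
  have s00 : (Finsupp.single (0:Fin 3) 1 : Fin 3 →₀ ℕ) 0 = 1 := Finsupp.single_eq_same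
  have s01 : (Finsupp.single (0:Fin 3) 1 : Fin 3 →₀ ℕ) 1 = 0 :=
    Finsupp.single_eq_of_ne (by decide)
  have s02 : (Finsupp.single (0:Fin 3) 1 : Fin 3 →₀ ℕ) 2 = 0 :=
    Finsupp.single_eq_of_ne (by decide)
  have s10 : (Finsupp.single (1:Fin 3) 1 : Fin 3 →₀ ℕ) 0 = 0 :=
    Finsupp.single_eq_of_ne (by decide)
  have s11 : (Finsupp.single (1:Fin 3) 1 : Fin 3 →₀ ℕ) 1 = 1 := Finsupp.single_eq_same
  have s12 : (Finsupp.single (1:Fin 3) 1 : Fin 3 →₀ ℕ) 2 = 0 :=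
    Finsupp.single_eq_of_ne (by decide)
  have c1 : (Finsupp.single (2:Fin 3) 1 ≤ d) ↔ 1 ≤ d 2 := by
    rw [Finsupp.le_def]
    constructor
    · intro h
      have := h 2
      rwa [s22] at this
    · intro h a
      rcases fin3_cases a with rfl | rfl | rfl
      · rw [s20]; omega
      · rw [s21]; omega
      · rw [s22]; omega
  have c2 : (Finsupp.single (0:Fin 3) 1 + Finsupp.single (2:Fin 3) 1 ≤ d) ↔
      (1 ≤ d 0 ∧ 1 ≤ d 2) := by
    rw [Finsupp.le_def]
    constructor
    · intro h
      have h0 := h 0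
      have h2 := h 2
      rw [Finsupp.add_apply, s00, s20] at h0
      rw [Finsupp.add_apply, s02, s22] at h2
      omega
    · rintro ⟨ha, hb⟩ a
      rcases fin3_cases a with rfl | rfl | rfl
      · rw [Finsupp.add_apply, s00, s20]; omega
      · rw [Finsupp.add_apply, s01, s21]; omega
      · rw [Finsupp.add_apply, s02, s22]; omega
  have c3 : (Finsupp.single (0:Fin 3) 1 + Finsupp.single (2:Fin 3) 2 ≤ d) ↔
      (1 ≤ d 0 ∧ 2 ≤ d 2) := by
    rw [Finsupp.le_def]
    constructor
    · intro h
      have h0 := h 0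
      have h2 := h 2
      rw [Finsupp.add_apply, s00, t20] at h0
      rw [Finsupp.add_apply, s02, t22] at h2
      omega
    · rintro ⟨ha, hb⟩ a
      rcases fin3_cases a with rfl | rfl | rfl
      · rw [Finsupp.add_apply, s00, t20]; omega
      · rw [Finsupp.add_apply, s01, t21]; omega
      · rw [Finsupp.add_apply, s02, t22]; omega
  have c4 : (Finsupp.single (1:Fin 3) 1 + Finsupp.single (2:Fin 3) 2 ≤ d) ↔
      (1 ≤ d 1 ∧ 2 ≤ d 2) := by
    rw [Finsupp.le_def]
    constructor
    · intro h
      have h0 := h 1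
      have h2 := h 2
      rw [Finsupp.add_apply, s11, t21] at h0
      rw [Finsupp.add_apply, s12, t22] at h2
      omega
    · rintro ⟨ha, hb⟩ a
      rcases fin3_cases a with rfl | rfl | rfl
      · rw [Finsupp.add_apply, s10, t20]; omega
      · rw [Finsupp.add_apply, s11, t21]; omega
      · rw [Finsupp.add_apply, s12, t22]; omega
  have r1 : (d = 0) ↔ (d 0 = 0 ∧ d 1 = 0 ∧ d 2 = 0) := by
    constructor
    · intro h
      rw [h]
      simp
    · rintro ⟨h0, h1, h2⟩
      ext a
      rcases fin3_cases a with rfl | rfl | rfl <;> simpa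
  have r2 : (d = Finsupp.single (2:Fin 3) 1) ↔ (d 0 = 0 ∧ d 1 = 0 ∧ d 2 = 1) := by
    constructor
    · intro h
      rw [h]
      exact ⟨s20, s21, s22⟩
    · rintro ⟨h0, h1, h2⟩
      ext a
      rcases fin3_cases a with rfl | rfl | rfl
      · rw [s20]; exact h0
      · rw [s21]; exact h1
      · rw [s22]; exact h2
  simp only [hsub, Finsupp.add_apply, s00, s01, s02, s10, s11, s12, s20, s21, s22,
    t20, t21, t22, c1, c2, c3, c4, r1, r2]
  have key := Acount_key (d 0) (d 1) (d 2)
  simp only [Nat.sub_zero, Nat.add_zero, Nat.zero_add] at *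
  convert key using 2 <;> norm_num
end

section
/- The generating function F_{{231,312,321}}(x,q,z) satisfies the identity (1 − xz − qz²)·F_{{231,312,321}}(x,q,z) = 1 as formal power series in x, q, z over the integers; that is, F_{{231,312,321}}(x,q,z) = 1/(1 − xz − qz²). -/
open MvPowerSeries

/- ====================== auxiliary development ====================== -/

section PatternAux

open Finset

variable {n m : ℕ}

lemma not_contains_231' (π : Equiv.Perm (Fin n))
    (hA : ∀ i : Fin n, (π i : ℕ) ≤ (i : ℕ) + 1)
    (hB : ∀ i : Fin n, (i : ℕ) ≤ (π i : ℕ) + 1) : PermAvoids π p231 := by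
  rintro ⟨f, hm, hi⟩
  have h01 : f 0 < f 1 := hm 0 1 (by decide)
  have h12 : f 1 < f 2 := hm 1 2 (by decide)
  have hv1 : π (f 0) < π (f 1) := (hi 0 1).1 (by decide)
  have hv2 : π (f 2) < π (f 0) := (hi 2 0).1 (by decide)
  have a1 := hA (f 0)
  have b1 := hB (f 2)
  rw [Fin.lt_def] at h01 h12 hv1 hv2
  omega

lemma not_contains_312' (π : Equiv.Perm (Fin n))
    (hA : ∀ i : Fin n, (π i : ℕ) ≤ (i : ℕ) + 1)
    (hB : ∀ i : Fin n, (i : ℕ) ≤ (π i : ℕ) + 1) : PermAvoids π p312 := by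
  rintro ⟨f, hm, hi⟩
  have h01 : f 0 < f 1 := hm 0 1 (by decide)
  have hv1 : π (f 1) < π (f 2) := (hi 1 2).1 (by decide)
  have hv2 : π (f 2) < π (f 0) := (hi 2 0).1 (by decide)
  have a1 := hA (f 0)
  have b1 := hB (f 1)
  rw [Fin.lt_def] at h01 hv1 hv2
  omega

lemma not_contains_321' (π : Equiv.Perm (Fin n))
    (hA : ∀ i : Fin n, (π i : ℕ) ≤ (i : ℕ) + 1)
    (hB : ∀ i : Fin n, (i : ℕ) ≤ (π i : ℕ) + 1) : PermAvoids π p321 := by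
  rintro ⟨f, hm, hi⟩
  have h01 : f 0 < f 1 := hm 0 1 (by decide)
  have h12 : f 1 < f 2 := hm 1 2 (by decide)
  have hv1 : π (f 1) < π (f 0) := (hi 1 0).1 (by decide)
  have hv2 : π (f 2) < π (f 1) := (hi 2 1).1 (by decide)
  have a1 := hA (f 0)
  have a2 := hA (f 1)
  have b1 := hB (f 1)
  have b2 := hB (f 2)
  rw [Fin.lt_def] at h01 h12 hv1 hv2
  omega

lemma contains_312 (π : Equiv.Perm (Fin n)) (a b c : Fin n)
    (hab : a < b) (hbc : b < c) (h1 : π b < π c) (h2 : π c < π a) :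
    PermContains π p312 := by
  refine ⟨![a, b, c], ?_, ?_⟩
  · intro i j hij
    fin_cases i <;> fin_cases j <;>
      simp_all <;> first | exact hab | exact hbc | exact hab.trans hbc
  · intro i j
    fin_cases i <;> fin_cases j <;>
      simp only [Matrix.cons_val_zero, Matrix.cons_val_one, Matrix.head_cons,
        Matrix.cons_val_two, Matrix.tail_cons] <;>
      constructor <;> intro h <;>
      first
        | exact absurd h (by decide)
        | exact (by decide)
        | exact h1 | exact h2 | exact h1.trans h2
        | exact absurd h h1.asymm | exact absurd h h2.asymm
        | exact absurd h (h1.trans h2).asymm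
        | exact absurd h (lt_irrefl _)

lemma contains_321 (π : Equiv.Perm (Fin n)) (a b c : Fin n)
    (hab : a < b) (hbc : b < c) (h1 : π c < π b) (h2 : π b < π a) :
    PermContains π p321 := by
  refine ⟨![a, b, c], ?_, ?_⟩
  · intro i j hij
    fin_cases i <;> fin_cases j <;>
      simp_all <;> first | exact hab | exact hbc | exact hab.trans hbc
  · intro i j
    fin_cases i <;> fin_cases j <;>
      simp only [Matrix.cons_val_zero, Matrix.cons_val_one, Matrix.head_cons,
        Matrix.cons_val_two, Matrix.tail_cons] <;>
      constructor <;> intro h <;>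
      first
        | exact absurd h (by decide)
        | exact (by decide)
        | exact h1 | exact h2 | exact h1.trans h2
        | exact absurd h h1.asymm | exact absurd h h2.asymm
        | exact absurd h (h1.trans h2).asymm
        | exact absurd h (lt_irrefl _)

lemma contains_inv (π : Equiv.Perm (Fin n)) (σ : Equiv.Perm (Fin m))
    (h : PermContains π σ) : PermContains π⁻¹ σ⁻¹ := by
  obtain ⟨f, hm, hi⟩ := h
  have hsm : StrictMono f := fun i j hij => hm i j hij
  refine ⟨fun i => π (f (σ⁻¹ i)), ?_, ?_⟩
  · intro i j hij
    exact (hi _ _).1 (by simpa using hij)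
  · intro i j
    have hk : ∀ k, π⁻¹ (π (f (σ⁻¹ k))) = f (σ⁻¹ k) := fun k => Equiv.symm_apply_apply π _
    rw [hk, hk, hsm.lt_iff_lt]

/-- The avoidance class is closed under inverses. -/
lemma avoids_inv (π : Equiv.Perm (Fin n))
    (h : ∀ σ ∈ ({p231, p312, p321} : Set (Equiv.Perm (Fin 3))), PermAvoids π σ) :
    ∀ σ ∈ ({p231, p312, p321} : Set (Equiv.Perm (Fin 3))), PermAvoids π⁻¹ σ := by
  have e1 : p231⁻¹ = p312 := by ext i; fin_cases i <;> rfl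
  have e2 : p312⁻¹ = p231 := by ext i; fin_cases i <;> rfl
  have e3 : p321⁻¹ = p321 := by ext i; fin_cases i <;> rfl
  intro σ hσ hcon
  have h2 := contains_inv _ _ hcon
  rw [inv_inv] at h2
  rcases hσ with rfl | rfl | rfl
  · rw [e1] at h2; exact h p312 (by simp [Set.mem_insert_iff]) h2
  · rw [e2] at h2; exact h p231 (by simp [Set.mem_insert_iff]) h2
  · rw [e3] at h2; exact h p321 (by simp [Set.mem_insert_iff]) h2

/-- Value bound A: an avoider satisfies `π i ≤ i + 1`. -/
lemma valA (π : Equiv.Perm (Fin n))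
    (hav : ∀ σ ∈ ({p231, p312, p321} : Set (Equiv.Perm (Fin 3))), PermAvoids π σ)
    (i : Fin n) : (π i : ℕ) ≤ (i : ℕ) + 1 := by
  classical
  by_contra hcon
  push_neg at hcon
  have hex : ∃ a b : Fin n, i < a ∧ a < b ∧ π a < π i ∧ π b < π i := by
    set T := univ.filter (fun k : Fin n => i < k ∧ π k < π i) with hT
    have hU : (univ.filter fun k : Fin n => π k < π i).card = (π i : ℕ) := by
      rw [← Fin.card_Iio (π i)]
      apply Finset.card_bij (fun k _ => π k)
      · intro a ha; simp at ha ⊢; exact ha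
      · intro a _ b _ hab; exact π.injective hab
      · intro b hb; simp at hb ⊢; exact ⟨π⁻¹ b, by simp [hb]⟩
    have hsub : (univ.filter fun k : Fin n => π k < π i) \ T ⊆ Finset.Iio i := by
      intro k hk
      simp only [hT, mem_sdiff, mem_filter, mem_univ, true_and, not_and] at hk
      simp only [Finset.mem_Iio]
      rcases lt_trichotomy k i with h1 | h1 | h1
      · exact h1
      · subst h1; exact absurd hk.1 (lt_irrefl _)
      · exact absurd hk.1 (hk.2 h1)
    have hsubcard : ((univ.filter fun k : Fin n => π k < π i) \ T).card ≤ (i : ℕ) := by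
      calc _ ≤ (Finset.Iio i).card := Finset.card_le_card hsub
      _ = (i : ℕ) := Fin.card_Iio i
    have hTcard : 2 ≤ T.card := by
      have h2 : (univ.filter fun k : Fin n => π k < π i).card ≤
          ((univ.filter fun k : Fin n => π k < π i) \ T).card + T.card :=
        Finset.card_le_card_sdiff_add_card
      omega
    obtain ⟨a, ha, b, hb, hab⟩ := Finset.one_lt_card.mp (by omega : 1 < T.card)
    simp only [hT, mem_filter, mem_univ, true_and] at ha hb
    rcases lt_or_gt_of_ne hab with h1 | h1
    · exact ⟨a, b, ha.1, h1, ha.2, hb.2⟩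
    · exact ⟨b, a, hb.1, h1, hb.2, ha.2⟩
  obtain ⟨a, b, hia, hab, hva, hvb⟩ := hex
  rcases lt_trichotomy (π a) (π b) with h1 | h1 | h1
  · exact hav p312 (by simp) (contains_312 π i a b hia hab h1 hvb)
  · exact absurd (π.injective h1) (ne_of_lt hab)
  · exact hav p321 (by simp) (contains_321 π i a b hia hab h1 hva)

/-- Value bound B: an avoider satisfies `i ≤ π i + 1`. -/
lemma valB (π : Equiv.Perm (Fin n))
    (hav : ∀ σ ∈ ({p231, p312, p321} : Set (Equiv.Perm (Fin 3))), PermAvoids π σ)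
    (i : Fin n) : (i : ℕ) ≤ (π i : ℕ) + 1 := by
  have h := valA π⁻¹ (avoids_inv π hav) (π i)
  rwa [Equiv.Perm.coe_inv, Equiv.symm_apply_apply] at h

lemma valD (π : Equiv.Perm (Fin n))
    (hav : ∀ σ ∈ ({p231, p312, p321} : Set (Equiv.Perm (Fin 3))), PermAvoids π σ) :
    ∀ a : ℕ, ∀ (h1 : a < n) (h2 : a + 1 < n),
      ¬ ((π ⟨a, h1⟩ : ℕ) = a + 1 ∧ (π ⟨a + 1, h2⟩ : ℕ) = a + 2) := by
  intro a
  induction a using Nat.strong_induction_on with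
  | _ a ih =>
    rintro h1 h2 ⟨ha1, ha2⟩
    set j := π⁻¹ ⟨a, h1⟩ with hj
    have hπj : π j = ⟨a, h1⟩ := Equiv.apply_symm_apply π _
    have hB := valB π hav j
    rw [hπj] at hB
    have hj1 : (j : ℕ) ≠ a := by
      intro h
      have : j = ⟨a, h1⟩ := Fin.ext h
      rw [this] at hπj
      have hv := congrArg Fin.val hπj
      simp only [Fin.val_mk] at hv
      omega
    have hj2 : (j : ℕ) ≠ a + 1 := by
      intro h
      have : j = ⟨a + 1, h2⟩ := Fin.ext h
      rw [this] at hπj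
      have hv := congrArg Fin.val hπj
      simp only [Fin.val_mk] at hv
      omega
    have hA := valA π hav j
    rw [hπj] at hA
    have hja : (j : ℕ) = a - 1 ∧ 1 ≤ a := by simp only [Fin.val_mk] at hB hA; omega
    have hlt : (j : ℕ) < a := by omega
    refine ih (j : ℕ) hlt (j.2) (by omega) ⟨?_, ?_⟩
    · rw [Fin.eta]; rw [hπj]; simp only [Fin.val_mk]; omega
    · have : (⟨(j : ℕ) + 1, by omega⟩ : Fin n) = ⟨a, h1⟩ := Fin.ext (by simp; omega)
      rw [this, ha1]  -- goal: a + 1 = ↑j + 2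
      omega

/-- Swap structure C: if `π i = i + 1` then `π (i+1) = i`. -/
lemma valC (π : Equiv.Perm (Fin n))
    (hav : ∀ σ ∈ ({p231, p312, p321} : Set (Equiv.Perm (Fin 3))), PermAvoids π σ)
    (a : ℕ) (h1 : a < n) (h2 : a + 1 < n) (h : (π ⟨a, h1⟩ : ℕ) = a + 1) :
    (π ⟨a + 1, h2⟩ : ℕ) = a := by
  have hA := valA π hav ⟨a + 1, h2⟩
  have hB := valB π hav ⟨a + 1, h2⟩
  simp only [Fin.val_mk] at hA hB
  have hne : (π ⟨a + 1, h2⟩ : ℕ) ≠ a + 1 := by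
    intro hx
    have : π ⟨a + 1, h2⟩ = π ⟨a, h1⟩ := Fin.ext (by omega)
    have := π.injective this
    have := congrArg Fin.val this
    simp at this
  have := valD π hav a h1 h2
  omega

/-- Swap structure C': if `π i = i - 1` (with `i ≥ 1`) then `π (i-1) = i`. -/
lemma valC' (π : Equiv.Perm (Fin n))
    (hav : ∀ σ ∈ ({p231, p312, p321} : Set (Equiv.Perm (Fin 3))), PermAvoids π σ)
    (a : ℕ) (h1 : a < n) (h2 : a + 1 < n) (h : (π ⟨a + 1, h2⟩ : ℕ) = a) :
    (π ⟨a, h1⟩ : ℕ) = a + 1 := by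
  have hinv : (π⁻¹ ⟨a, h1⟩ : ℕ) = a + 1 := by
    have : π ⟨a + 1, h2⟩ = ⟨a, h1⟩ := Fin.ext h
    rw [← this, Equiv.Perm.coe_inv, Equiv.symm_apply_apply]
  have := valC π⁻¹ (avoids_inv π hav) a h1 h2 hinv
  have h3 : π⁻¹ ⟨a + 1, h2⟩ = ⟨a, h1⟩ := Fin.ext this
  rw [← h3, Equiv.Perm.coe_inv, Equiv.apply_symm_apply]

end PatternAux


section SparseAux

open Finset

/-- A subset of `{0, …, n-2}` with no two consecutive elements. -/
def Sparse (n : ℕ) (s : Finset ℕ) : Prop :=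
  (∀ a ∈ s, a + 1 < n) ∧ ∀ a ∈ s, a + 1 ∉ s

instance (n : ℕ) (s : Finset ℕ) : Decidable (Sparse n s) := by
  unfold Sparse; infer_instance

/-- The function of the involution determined by a sparse set. -/
def sfun (n : ℕ) (s : Finset ℕ) (i : Fin n) : Fin n :=
  if h : (i : ℕ) ∈ s ∧ (i : ℕ) + 1 < n then ⟨(i : ℕ) + 1, h.2⟩
  else if 0 < (i : ℕ) ∧ (i : ℕ) - 1 ∈ s then
    ⟨(i : ℕ) - 1, lt_of_le_of_lt (Nat.sub_le _ _) i.2⟩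
  else i

variable {n : ℕ} {s : Finset ℕ}

lemma sfun_mem (hs : Sparse n s) {i : Fin n} (h : (i : ℕ) ∈ s) :
    (sfun n s i : ℕ) = (i : ℕ) + 1 := by
  rw [sfun, dif_pos ⟨h, hs.1 _ h⟩]

lemma sfun_pred (hs : Sparse n s) {i : Fin n} (h0 : 0 < (i : ℕ)) (h : (i : ℕ) - 1 ∈ s) :
    (sfun n s i : ℕ) = (i : ℕ) - 1 := by
  have hni : (i : ℕ) ∉ s := by
    intro hmem
    have h2 := hs.2 _ h
    have h3 : (i : ℕ) - 1 + 1 = (i : ℕ) := by omega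
    rw [h3] at h2
    exact h2 hmem
  rw [sfun, dif_neg (by tauto), if_pos ⟨h0, h⟩]

lemma sfun_fix (h1 : (i : Fin n) = i) : True := trivial

lemma sfun_id {i : Fin n} (h1 : (i : ℕ) ∉ s) (h2 : ¬(0 < (i : ℕ) ∧ (i : ℕ) - 1 ∈ s)) :
    sfun n s i = i := by
  rw [sfun, dif_neg (by tauto), if_neg h2]

lemma sfun_invol (hs : Sparse n s) : Function.Involutive (sfun n s) := by
  intro i
  by_cases h1 : (i : ℕ) ∈ s
  · have e1 : (sfun n s i : ℕ) = (i : ℕ) + 1 := sfun_mem hs h1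
    have e2 : (sfun n s (sfun n s i) : ℕ) = (i : ℕ) := by
      have hp : (sfun n s (sfun n s i) : ℕ) = ((sfun n s i : ℕ)) - 1 := by
        apply sfun_pred hs (by omega)
        rw [e1]; simpa using h1
      omega
    exact Fin.ext e2
  · by_cases h2 : 0 < (i : ℕ) ∧ (i : ℕ) - 1 ∈ s
    · have e1 : (sfun n s i : ℕ) = (i : ℕ) - 1 := sfun_pred hs h2.1 h2.2
      have e2 : (sfun n s (sfun n s i) : ℕ) = ((sfun n s i : ℕ)) + 1 := by
        apply sfun_mem hs; rw [e1]; exact h2.2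
      exact Fin.ext (by omega)
    · rw [sfun_id h1 h2, sfun_id h1 h2]

/-- The permutation determined by a sparse set. -/
def sperm (n : ℕ) (s : Finset ℕ) (hs : Sparse n s) : Equiv.Perm (Fin n) :=
  (sfun_invol hs).toPerm

lemma sperm_apply (hs : Sparse n s) (i : Fin n) : sperm n s hs i = sfun n s i := rfl

lemma sperm_A (hs : Sparse n s) (i : Fin n) : (sperm n s hs i : ℕ) ≤ (i : ℕ) + 1 := by
  rw [sperm_apply, sfun]
  split
  · simp only [Fin.val_mk]; omega
  · split
    · simp only [Fin.val_mk]; omega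
    · omega

lemma sperm_B (hs : Sparse n s) (i : Fin n) : (i : ℕ) ≤ (sperm n s hs i : ℕ) + 1 := by
  rw [sperm_apply, sfun]
  split
  · simp only [Fin.val_mk]; omega
  · split
    · simp only [Fin.val_mk]; omega
    · omega

lemma sperm_avoids (hs : Sparse n s) :
    ∀ σ ∈ ({p231, p312, p321} : Set (Equiv.Perm (Fin 3))), PermAvoids (sperm n s hs) σ := by
  intro σ hσ
  rcases hσ with rfl | rfl | rfl
  · exact not_contains_231' _ (sperm_A hs) (sperm_B hs)
  · exact not_contains_312' _ (sperm_A hs) (sperm_B hs)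
  · exact not_contains_321' _ (sperm_A hs) (sperm_B hs)

/-- card of a filter over `Fin n` of membership in `s`. -/
lemma card_filter_mem (hn : ∀ a ∈ s, a < n) :
    (univ.filter fun i : Fin n => (i : ℕ) ∈ s).card = s.card := by
  refine Finset.card_bij (fun i _ => (i : ℕ)) ?_ ?_ ?_
  · intro a ha; simp at ha; exact ha
  · intro a _ b _ h; exact Fin.ext h
  · intro b hb; exact ⟨⟨b, hn b hb⟩, by simp [hb]⟩

lemma exc_sperm (hs : Sparse n s) : excCount (sperm n s hs) = s.card := by
  classical
  rw [excCount, Nat.card_eq_fintype_card, Fintype.card_subtype]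
  rw [← card_filter_mem (fun a ha => lt_trans (by omega) (hs.1 a ha))]
  congr 1
  apply Finset.filter_congr
  intro i _
  simp only [sperm_apply]
  constructor
  · intro hlt
    by_contra hmem
    by_cases h2 : 0 < (i : ℕ) ∧ (i : ℕ) - 1 ∈ s
    · have := sfun_pred hs h2.1 h2.2
      rw [Fin.lt_def] at hlt; omega
    · rw [sfun_id hmem h2] at hlt; exact absurd hlt (lt_irrefl _)
  · intro hmem
    rw [Fin.lt_def, sfun_mem hs hmem]; omega

lemma fp_sperm (hs : Sparse n s) : fpCount (sperm n s hs) + 2 * s.card = n := by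
  classical
  rw [fpCount, Nat.card_eq_fintype_card, Fintype.card_subtype]
  have hsplit := Finset.card_filter_add_card_filter_not
    (s := (univ : Finset (Fin n))) (p := fun i => sperm n s hs i = i)
  have hneg : (univ.filter fun i : Fin n => ¬ sperm n s hs i = i) =
      (univ.filter fun i : Fin n => (i : ℕ) ∈ s) ∪
      (univ.filter fun i : Fin n => 0 < (i : ℕ) ∧ (i : ℕ) - 1 ∈ s) := by
    rw [← Finset.filter_or]
    apply Finset.filter_congr
    intro i _
    simp only [sperm_apply]
    constructor
    · intro hne
      by_contra hc
      push_neg at hc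
      exact hne (sfun_id hc.1 (fun hx => hc.2 hx.1 hx.2))
    · rintro (h1 | h2) heq
      · have := sfun_mem hs h1
        rw [heq] at this; omega
      · have := sfun_pred hs h2.1 h2.2
        rw [heq] at this; omega
  have hdisj : Disjoint (univ.filter fun i : Fin n => (i : ℕ) ∈ s)
      (univ.filter fun i : Fin n => 0 < (i : ℕ) ∧ (i : ℕ) - 1 ∈ s) := by
    rw [Finset.disjoint_filter]
    intro i _ h1 h2
    have := hs.2 ((i : ℕ) - 1) h2.2
    have : (i : ℕ) - 1 + 1 = (i : ℕ) := by omega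
    simp_all
  have hc1 : (univ.filter fun i : Fin n => (i : ℕ) ∈ s).card = s.card :=
    card_filter_mem (fun a ha => lt_trans (by omega) (hs.1 a ha))
  have hc2 : (univ.filter fun i : Fin n => 0 < (i : ℕ) ∧ (i : ℕ) - 1 ∈ s).card = s.card := by
    refine Finset.card_bij (fun i _ => (i : ℕ) - 1) ?_ ?_ ?_
    · intro a ha; simp at ha; exact ha.2
    · intro a ha b hb h
      simp at ha hb
      have h' : (a : ℕ) - 1 = (b : ℕ) - 1 := h
      exact Fin.ext (by omega)
    · intro b hb
      refine ⟨⟨b + 1, hs.1 b hb⟩, ?_, by simp⟩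
      simp [hb]
  rw [hneg, Finset.card_union_of_disjoint hdisj, hc1, hc2] at hsplit
  simp only [Finset.card_univ, Fintype.card_fin] at hsplit
  omega

lemma sparse_two_mul_card_le (hs : Sparse n s) : 2 * s.card ≤ n := by
  have := fp_sperm hs
  omega

end SparseAux


section BijAux

open Finset

variable {n : ℕ}

/-- The set of ascents `π i = i + 1` of a permutation, as a set of naturals. -/
def sOf (π : Equiv.Perm (Fin n)) : Finset ℕ :=
  (univ.filter fun i : Fin n => (π i : ℕ) = (i : ℕ) + 1).image Fin.val

lemma mem_sOf {π : Equiv.Perm (Fin n)} {a : ℕ} :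
    a ∈ sOf π ↔ ∃ h : a < n, (π ⟨a, h⟩ : ℕ) = a + 1 := by
  simp only [sOf, Finset.mem_image, Finset.mem_filter, Finset.mem_univ, true_and]
  constructor
  · rintro ⟨i, hi, rfl⟩
    exact ⟨i.2, by rwa [Fin.eta]⟩
  · rintro ⟨h, hv⟩
    exact ⟨⟨a, h⟩, hv, rfl⟩

lemma sparse_sOf (π : Equiv.Perm (Fin n))
    (hav : ∀ σ ∈ ({p231, p312, p321} : Set (Equiv.Perm (Fin 3))), PermAvoids π σ) :
    Sparse n (sOf π) := by
  constructor
  · intro a ha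
    obtain ⟨h, hv⟩ := mem_sOf.mp ha
    have := (π ⟨a, h⟩).2
    omega
  · intro a ha hb
    obtain ⟨h, hv⟩ := mem_sOf.mp ha
    obtain ⟨h', hv'⟩ := mem_sOf.mp hb
    have := valC π hav a h h' hv
    omega

lemma sOf_sperm {s : Finset ℕ} (hs : Sparse n s) : sOf (sperm n s hs) = s := by
  ext a
  rw [mem_sOf]
  constructor
  · rintro ⟨h, hv⟩
    rw [sperm_apply] at hv
    by_cases h1 : a ∈ s
    · exact h1
    · exfalso
      by_cases h2 : 0 < a ∧ a - 1 ∈ s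
      · have := sfun_pred hs (i := ⟨a, h⟩) h2.1 h2.2
        simp only [Fin.val_mk] at this
        omega
      · have := sfun_id (i := ⟨a, h⟩) (by simpa using h1) (by simpa using h2)
        rw [this] at hv
        simp at hv
  · intro ha
    have h : a < n := by have := hs.1 a ha; omega
    refine ⟨h, ?_⟩
    rw [sperm_apply]
    exact sfun_mem hs (by simpa using ha)

lemma sperm_sOf (π : Equiv.Perm (Fin n))
    (hav : ∀ σ ∈ ({p231, p312, p321} : Set (Equiv.Perm (Fin 3))), PermAvoids π σ) :
    sperm n (sOf π) (sparse_sOf π hav) = π := by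
  have hs := sparse_sOf π hav
  ext i
  rw [sperm_apply]
  by_cases h1 : (i : ℕ) ∈ sOf π
  · obtain ⟨h, hv⟩ := mem_sOf.mp h1
    rw [sfun_mem hs h1, Fin.eta] at *
    omega
  · by_cases h2 : 0 < (i : ℕ) ∧ (i : ℕ) - 1 ∈ sOf π
    · obtain ⟨h, hv⟩ := mem_sOf.mp h2.2
      have hC := valC π hav ((i : ℕ) - 1) h (by omega) hv
      have he : (⟨(i : ℕ) - 1 + 1, by omega⟩ : Fin n) = i := Fin.ext (by simp; omega)
      rw [he] at hC
      rw [sfun_pred hs h2.1 h2.2]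
      omega
    · rw [sfun_id h1 h2]
      have hA := valA π hav i
      have hB := valB π hav i
      -- π i ∈ {i-1, i, i+1}; rule out the extremes
      rcases lt_trichotomy ((π i : ℕ)) ((i : ℕ)) with hlt | heq | hgt
      · exfalso
        have hval : (π i : ℕ) = (i : ℕ) - 1 := by omega
        have h0 : 0 < (i : ℕ) := by omega
        have hC' := valC' π hav ((i : ℕ) - 1) (by omega) (by omega)
          (by
            have he : (⟨(i : ℕ) - 1 + 1, by omega⟩ : Fin n) = i := Fin.ext (by simp; omega)
            rw [he]; omega)
        apply h2
        refine ⟨h0, mem_sOf.mpr ⟨by omega, ?_⟩⟩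
        rw [hC']
      · omega
      · exfalso
        apply h1
        have hval : (π i : ℕ) = (i : ℕ) + 1 := by omega
        exact mem_sOf.mpr ⟨i.2, by rwa [Fin.eta]⟩

/-- The number of sparse subsets of `{0,…,n-2}` of cardinality `j`. -/
def M (n j : ℕ) : ℕ :=
  (((Finset.range n).powerset).filter fun s => Sparse n s ∧ s.card = j).card

lemma count_eq (d0 d1 n : ℕ) :
    Nat.card {π : Equiv.Perm (Fin n) //
        (∀ σ ∈ ({p231, p312, p321} : Set (Equiv.Perm (Fin 3))), PermAvoids π σ) ∧
        fpCount π = d0 ∧ excCount π = d1} =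
      if d0 + 2 * d1 = n then M n d1 else 0 := by
  classical
  have e : {π : Equiv.Perm (Fin n) //
        (∀ σ ∈ ({p231, p312, p321} : Set (Equiv.Perm (Fin 3))), PermAvoids π σ) ∧
        fpCount π = d0 ∧ excCount π = d1} ≃
      {s : Finset ℕ // Sparse n s ∧ n - 2 * s.card = d0 ∧ s.card = d1} := by
    refine
      { toFun := fun π => ⟨sOf π.1, sparse_sOf π.1 π.2.1, ?_, ?_⟩
        invFun := fun s => ⟨sperm n s.1 s.2.1, sperm_avoids s.2.1, ?_, ?_⟩
        left_inv := ?_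
        right_inv := ?_ }
    · -- n - 2 * card = d0
      have h1 := fp_sperm (sparse_sOf π.1 π.2.1)
      rw [sperm_sOf π.1 π.2.1] at h1
      have := π.2.2.1
      omega
    · have h1 := exc_sperm (sparse_sOf π.1 π.2.1)
      rw [sperm_sOf π.1 π.2.1] at h1
      have := π.2.2.2
      omega
    · have h1 := fp_sperm s.2.1
      have h2 := s.2.2.1
      omega
    · rw [exc_sperm s.2.1]; exact s.2.2.2
    · intro π
      exact Subtype.ext (sperm_sOf π.1 π.2.1)
    · intro s
      exact Subtype.ext (sOf_sperm s.2.1)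
  rw [Nat.card_congr e]
  by_cases h : d0 + 2 * d1 = n
  · rw [if_pos h]
    have e2 : {s : Finset ℕ // Sparse n s ∧ n - 2 * s.card = d0 ∧ s.card = d1} ≃
        {s : Finset ℕ // s ∈ ((Finset.range n).powerset).filter
          fun s => Sparse n s ∧ s.card = d1} := by
      apply Equiv.subtypeEquivRight
      intro s
      simp only [Finset.mem_filter, Finset.mem_powerset]
      constructor
      · rintro ⟨hs, _, hc⟩
        refine ⟨fun a ha => Finset.mem_range.mpr (by have := hs.1 a ha; omega), hs, hc⟩
      · rintro ⟨_, hs, hc⟩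
        have := sparse_two_mul_card_le hs
        exact ⟨hs, by omega, hc⟩
    rw [Nat.card_congr e2, Nat.card_eq_finsetCard]
    rfl
  · rw [if_neg h]
    have : IsEmpty {s : Finset ℕ // Sparse n s ∧ n - 2 * s.card = d0 ∧ s.card = d1} := by
      constructor
      rintro ⟨s, hs, h1, h2⟩
      have := sparse_two_mul_card_le hs
      omega
    exact Nat.card_of_isEmpty

end BijAux


section CountAux

open Finset

lemma M_zero (n : ℕ) : M n 0 = 1 := by
  have h : (((Finset.range n).powerset).filter fun s => Sparse n s ∧ s.card = 0) = {∅} := by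
    ext s
    simp only [Finset.mem_filter, Finset.mem_powerset, Finset.mem_singleton,
      Finset.card_eq_zero]
    constructor
    · rintro ⟨-, -, rfl⟩; rfl
    · rintro rfl
      exact ⟨Finset.empty_subset _,
        ⟨fun a ha => absurd ha (Finset.notMem_empty a),
         fun a ha => absurd ha (Finset.notMem_empty a)⟩, rfl⟩
  rw [M, h, Finset.card_singleton]

lemma M_bound {n j : ℕ} (h : n < 2 * j) : M n j = 0 := by
  rw [M, Finset.card_eq_zero, Finset.filter_eq_empty_iff]
  rintro s - ⟨hs, hc⟩
  have := sparse_two_mul_card_le hs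
  omega

lemma M_rec (n j : ℕ) : M (n + 2) (j + 1) = M (n + 1) (j + 1) + M n j := by
  classical
  have hsplit := Finset.card_filter_add_card_filter_not
    (s := ((Finset.range (n + 2)).powerset).filter fun s => Sparse (n + 2) s ∧ s.card = j + 1)
    (p := fun s => n ∈ s)
  have h1 : ((((Finset.range (n + 2)).powerset).filter
      fun s => Sparse (n + 2) s ∧ s.card = j + 1).filter fun s => n ∉ s) =
      ((Finset.range (n + 1)).powerset).filter fun s => Sparse (n + 1) s ∧ s.card = j + 1 := by
    ext s
    simp only [Finset.mem_filter, Finset.mem_powerset]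
    constructor
    · rintro ⟨⟨hsub, hs, hc⟩, hn⟩
      have hb : ∀ a ∈ s, a + 1 < n + 1 := by
        intro a ha
        have h2 := hs.1 a ha
        have : a ≠ n := fun h => hn (h ▸ ha)
        omega
      exact ⟨fun a ha => Finset.mem_range.mpr (by have := hb a ha; omega),
        ⟨hb, hs.2⟩, hc⟩
    · rintro ⟨hsub, hs, hc⟩
      have hb : ∀ a ∈ s, a + 1 < n + 1 := hs.1
      refine ⟨⟨fun a ha => Finset.mem_range.mpr (by have := hb a ha; omega),
        ⟨fun a ha => by have := hb a ha; omega, hs.2⟩, hc⟩, ?_⟩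
      intro hn
      have := hb n hn
      omega
  have h2 : ((((Finset.range (n + 2)).powerset).filter
      fun s => Sparse (n + 2) s ∧ s.card = j + 1).filter fun s => n ∈ s).card =
      (((Finset.range n).powerset).filter fun s => Sparse n s ∧ s.card = j).card := by
    refine Finset.card_bij' (fun s _ => s.erase n) (fun t _ => insert n t) ?_ ?_ ?_ ?_
    · intro s hs
      simp only [Finset.mem_filter, Finset.mem_powerset] at hs ⊢
      obtain ⟨⟨hsub, hsp, hc⟩, hn⟩ := hs
      have hmax : ∀ a ∈ s.erase n, a + 1 < n := by
        intro a ha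
        rw [Finset.mem_erase] at ha
        have hb := hsp.1 a ha.2
        have : a ≠ n - 1 := by
          intro h
          rcases Nat.eq_zero_or_pos n with rfl | hpos
          · exact ha.1 (by omega)
          · have := hsp.2 a ha.2
            have : a + 1 = n := by omega
            exact absurd (this ▸ hn) ‹a + 1 ∉ s›
        omega
      refine ⟨fun a ha => Finset.mem_range.mpr (by have := hmax a ha; omega),
        ⟨hmax, fun a ha => ?_⟩, ?_⟩
      · intro hmem
        exact hsp.2 a (Finset.mem_of_mem_erase ha) (Finset.mem_of_mem_erase hmem)
      · rw [Finset.card_erase_of_mem hn, hc]; omega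
    · intro t ht
      simp only [Finset.mem_filter, Finset.mem_powerset] at ht ⊢
      obtain ⟨hsub, hsp, hc⟩ := ht
      have hnt : n ∉ t := fun h => by have := hsp.1 n h; omega
      refine ⟨⟨?_, ⟨?_, ?_⟩, ?_⟩, Finset.mem_insert_self n t⟩
      · intro a ha
        rcases Finset.mem_insert.mp ha with rfl | ha
        · exact Finset.mem_range.mpr (by omega)
        · exact Finset.mem_range.mpr (by have := hsp.1 a ha; omega)
      · intro a ha
        rcases Finset.mem_insert.mp ha with rfl | ha
        · omega
        · have := hsp.1 a ha; omega
      · intro a ha hmem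
        rcases Finset.mem_insert.mp ha with rfl | ha
        · rcases Finset.mem_insert.mp hmem with h | h
          · omega
          · have := hsp.1 _ h; omega
        · rcases Finset.mem_insert.mp hmem with h | h
          · have := hsp.1 a ha; omega
          · exact hsp.2 a ha h
      · rw [Finset.card_insert_of_notMem hnt, hc]
    · intro s hs
      simp only [Finset.mem_filter] at hs
      exact Finset.insert_erase hs.2
    · intro t ht
      simp only [Finset.mem_filter, Finset.mem_powerset] at ht
      have hnt : n ∉ t := fun h => by have := ht.2.1.1 n h; omega
      exact Finset.erase_insert hnt
  rw [h1] at hsplit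
  rw [h2] at hsplit
  rw [M, M, M]
  omega

lemma M_key {i j n : ℕ} (h : i + 2 * j = n) (hn : 1 ≤ n) :
    M n j = (if 1 ≤ i then M (n - 1) j else 0) + (if 1 ≤ j then M (n - 2) (j - 1) else 0) := by
  rcases j with _ | j'
  · have hi : 1 ≤ i := by omega
    rw [if_pos hi, if_neg (by omega), M_zero, M_zero, add_zero]
  · rcases Nat.lt_or_ge i 1 with hi | hi
    · have hi0 : i = 0 := by omega
      have hn2 : n = 2 * j' + 2 := by omega
      subst hn2
      rw [if_neg (by omega), if_pos (by omega), zero_add]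
      have hrec := M_rec (2 * j') j'
      have hzero : M (2 * j' + 1) (j' + 1) = 0 := M_bound (by omega)
      have e1 : 2 * j' + 2 - 2 = 2 * j' := by omega
      have e2 : j' + 1 - 1 = j' := by omega
      have e3 : 2 * j' + 2 - 1 = 2 * j' + 1 := by omega
      rw [e1, e2]
      rw [e3] at *
      omega
    · rw [if_pos hi, if_pos (by omega)]
      obtain ⟨m, rfl⟩ : ∃ m, n = m + 2 := ⟨n - 2, by omega⟩
      have e1 : m + 2 - 1 = m + 1 := by omega
      have e2 : m + 2 - 2 = m := by omega
      have e3 : j' + 1 - 1 = j' := by omega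
      rw [e1, e2, e3]
      exact M_rec m j'

lemma natmain (i j n : ℕ) :
    ((if i + 2 * j = n then M n j else 0 : ℕ) : ℤ)
      - (if 1 ≤ i ∧ 1 ≤ n then
          ((if i - 1 + 2 * j = n - 1 then M (n - 1) j else 0 : ℕ) : ℤ) else 0)
      - (if 1 ≤ j ∧ 2 ≤ n then
          ((if i + 2 * (j - 1) = n - 2 then M (n - 2) (j - 1) else 0 : ℕ) : ℤ) else 0)
      = if i = 0 ∧ j = 0 ∧ n = 0 then 1 else 0 := by
  rcases Nat.eq_zero_or_pos n with rfl | hn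
  · by_cases h : i + 2 * j = 0
    · obtain ⟨rfl, rfl⟩ : i = 0 ∧ j = 0 := by omega
      norm_num [M_zero]
    · rw [if_neg h, if_neg (show ¬(i = 0 ∧ j = 0 ∧ 0 = 0) by omega),
          if_neg (show ¬(1 ≤ i ∧ 1 ≤ 0) by omega), if_neg (show ¬(1 ≤ j ∧ 2 ≤ 0) by omega)]
      norm_num
  · rw [if_neg (show ¬(i = 0 ∧ j = 0 ∧ n = 0) by omega)]
    by_cases h : i + 2 * j = n
    · rw [if_pos h]
      have hkey := M_key h hn
      by_cases hi : 1 ≤ i <;> by_cases hj : 1 ≤ j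
      · rw [if_pos (show 1 ≤ i ∧ 1 ≤ n from ⟨hi, hn⟩),
            if_pos (show 1 ≤ j ∧ 2 ≤ n from ⟨hj, by omega⟩),
            if_pos (show i - 1 + 2 * j = n - 1 by omega),
            if_pos (show i + 2 * (j - 1) = n - 2 by omega)]
        rw [if_pos hi, if_pos hj] at hkey
        push_cast
        omega
      · rw [if_pos (show 1 ≤ i ∧ 1 ≤ n from ⟨hi, hn⟩),
            if_neg (show ¬(1 ≤ j ∧ 2 ≤ n) by omega),
            if_pos (show i - 1 + 2 * j = n - 1 by omega)]
        rw [if_pos hi, if_neg hj] at hkey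
        push_cast
        omega
      · rw [if_neg (show ¬(1 ≤ i ∧ 1 ≤ n) by omega),
            if_pos (show 1 ≤ j ∧ 2 ≤ n from ⟨hj, by omega⟩),
            if_pos (show i + 2 * (j - 1) = n - 2 by omega)]
        rw [if_neg hi, if_pos hj] at hkey
        push_cast
        omega
      · exfalso; omega
    · rw [if_neg h]
      have h2 : (if 1 ≤ i ∧ 1 ≤ n then
          ((if i - 1 + 2 * j = n - 1 then M (n - 1) j else 0 : ℕ) : ℤ) else 0) = 0 := by
        by_cases hc : 1 ≤ i ∧ 1 ≤ n
        · rw [if_pos hc, if_neg (show ¬(i - 1 + 2 * j = n - 1) by omega)]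
          norm_num
        · rw [if_neg hc]
      have h3 : (if 1 ≤ j ∧ 2 ≤ n then
          ((if i + 2 * (j - 1) = n - 2 then M (n - 2) (j - 1) else 0 : ℕ) : ℤ) else 0) = 0 := by
        by_cases hc : 1 ≤ j ∧ 2 ≤ n
        · rw [if_pos hc, if_neg (show ¬(i + 2 * (j - 1) = n - 2) by omega)]
          norm_num
        · rw [if_neg hc]
      rw [h2, h3]
      norm_num

end CountAux

/-- (1 − xz − qz²)·F_{{231,312,321}}(x,q,z) = 1, i.e. F_{{231,312,321}} = 1/(1 − xz − qz²). -/
theorem F231_312_321_identity :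
    (1 - vx * vz - vq * vz ^ 2) * patternGF {p231, p312, p321} = 1 := by
  classical
  have hm1 : vx * vz =
      monomial (Finsupp.single (0 : Fin 3) 1 + Finsupp.single (2 : Fin 3) 1) 1 := by
    rw [vx, vz, X, X, monomial_mul_monomial, one_mul]
  have hm2 : vq * vz ^ 2 =
      monomial (Finsupp.single (1 : Fin 3) 1 + Finsupp.single (2 : Fin 3) 2) 1 := by
    rw [vq, vz, X, X_pow_eq, monomial_mul_monomial, one_mul]
  have hF : ∀ e : Fin 3 →₀ ℕ, (coeff e) (patternGF {p231, p312, p321}) =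
      ((if e 0 + 2 * e 1 = e 2 then M (e 2) (e 1) else 0 : ℕ) : ℤ) := by
    intro e
    show ((Nat.card _ : ℤ)) = _
    exact_mod_cast congrArg (Nat.cast (R := ℤ)) (count_eq (e 0) (e 1) (e 2))
  ext d
  rw [sub_mul, sub_mul, one_mul, map_sub, map_sub, hm1, hm2,
    coeff_monomial_mul, coeff_monomial_mul, coeff_one, hF]
  have hc1 : (Finsupp.single (0 : Fin 3) 1 + Finsupp.single (2 : Fin 3) 1 ≤ d) ↔
      (1 ≤ d 0 ∧ 1 ≤ d 2) := by
    rw [Finsupp.le_def]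
    constructor
    · intro h
      refine ⟨?_, ?_⟩
      · have := h 0; simpa using this
      · have := h 2; simpa using this
    · rintro ⟨h1, h2⟩ k
      fin_cases k <;> simp [Finsupp.single_apply] <;> omega
  have hc2 : (Finsupp.single (1 : Fin 3) 1 + Finsupp.single (2 : Fin 3) 2 ≤ d) ↔
      (1 ≤ d 1 ∧ 2 ≤ d 2) := by
    rw [Finsupp.le_def]
    constructor
    · intro h
      refine ⟨?_, ?_⟩
      · have := h 1; simpa using this
      · have := h 2; simpa using this
    · rintro ⟨h1, h2⟩ k
      fin_cases k <;> simp [Finsupp.single_apply] <;> omega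
  have hd0 : (d = 0) ↔ (d 0 = 0 ∧ d 1 = 0 ∧ d 2 = 0) := by
    constructor
    · rintro rfl; simp
    · rintro ⟨h1, h2, h3⟩
      ext k
      fin_cases k <;> simpa
  have hsub1 : ∀ k : Fin 3,
      (d - ((Finsupp.single (0 : Fin 3) 1 + Finsupp.single (2 : Fin 3) 1 : Fin 3 →₀ ℕ))) k =
        d k - ((Finsupp.single (0 : Fin 3) 1 + Finsupp.single (2 : Fin 3) 1 : Fin 3 →₀ ℕ)) k :=
    fun k => Finsupp.tsub_apply _ _ k
  have hsub2 : ∀ k : Fin 3,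
      (d - ((Finsupp.single (1 : Fin 3) 1 + Finsupp.single (2 : Fin 3) 2 : Fin 3 →₀ ℕ))) k =
        d k - ((Finsupp.single (1 : Fin 3) 1 + Finsupp.single (2 : Fin 3) 2 : Fin 3 →₀ ℕ)) k :=
    fun k => Finsupp.tsub_apply _ _ k
  have hv1 : ∀ k : Fin 3, ((Finsupp.single (0 : Fin 3) 1 + Finsupp.single (2 : Fin 3) 1 : Fin 3 →₀ ℕ)) k =
      ![1, 0, 1] k := by
    intro k; fin_cases k <;> simp [Finsupp.single_apply]
  have hv2 : ∀ k : Fin 3, ((Finsupp.single (1 : Fin 3) 1 + Finsupp.single (2 : Fin 3) 2 : Fin 3 →₀ ℕ)) k =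
      ![0, 1, 2] k := by
    intro k; fin_cases k <;> simp [Finsupp.single_apply]
  have he1 : ∀ k : Fin 3,
      (d - ((Finsupp.single (0 : Fin 3) 1 + Finsupp.single (2 : Fin 3) 1 : Fin 3 →₀ ℕ))) k =
        d k - ![1, 0, 1] k := fun k => by rw [hsub1 k, hv1 k]
  have he2 : ∀ k : Fin 3,
      (d - ((Finsupp.single (1 : Fin 3) 1 + Finsupp.single (2 : Fin 3) 2 : Fin 3 →₀ ℕ))) k =
        d k - ![0, 1, 2] k := fun k => by rw [hsub2 k, hv2 k]
  simp only [one_mul, hF, hc1, hc2, hd0, he1, he2]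
  simp only [Matrix.cons_val_zero, Matrix.cons_val_one, Matrix.head_cons,
    Matrix.cons_val_two, Matrix.tail_cons, Nat.sub_zero]
  exact natmain (d 0) (d 1) (d 2)
end
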